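/- arXiv:1011.0683 — 6 statements merged into one kernel-verified Lean document; each statement's English description precedes it below -/
import Mathlib

section
/- Let X be a metric space with the finite doubling property and let 0 < r < 1/3. Then there exists, for each k ∈ ℤ, an index set N_k ⊂ ℕ and Borel sets Q_{k,i} ⊂ X (i ∈ N_k) with points x_{k,i} ∈ X such that: (i) X = ⋃_{i ∈ N_k} Q_{k,i} for every k; (ii) for k ≥ m, each Q_{k,i} is either contained in or disjoint from each Q_{m,j}; (iii) U(x_{k,i}, c r^k) ⊂ Q_{k,i} ⊂ B(x_{k,i}, C r^k) where c = 1/2 − r/(1−r) and C = 1/(1−r); (iv) there is a point x_0 such that for every k there is i ∈ N_k with U(x_0, c r^k) ⊂ Q_{k,i}; (v) {x_{k,i} : i ∈ N_k} ⊂ {x_{k+1,i} : i ∈ N_{k+1}} for all k. -/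
open Metric Set
open scoped Classical

namespace GDC

variable {X : Type*} [MetricSpace X]

open Classical in
private theorem _dummy : True := trivial

/-- Iterated finite covers from the finite doubling property. -/
lemma cover_of_hFD
    (hFD : ∀ (x : X) (ρ : ℝ), ∃ s : Finset X,
      Metric.closedBall x (2 * ρ) ⊆ ⋃ y ∈ s, Metric.closedBall y ρ)
    (x : X) (R ε : ℝ) (hε : 0 < ε) :
    ∃ s : Finset X, Metric.closedBall x R ⊆ ⋃ y ∈ s, Metric.closedBall y ε := by
  have main : ∀ m : ℕ, ∀ x : X, ∃ s : Finset X,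
      Metric.closedBall x (2 ^ m * ε) ⊆ ⋃ y ∈ s, Metric.closedBall y ε := by
    classical
    intro m
    induction m with
    | zero => intro x; exact ⟨{x}, by simp⟩
    | succ m ih =>
      intro x
      obtain ⟨s, hs⟩ := hFD x (2 ^ m * ε)
      choose t ht using fun y : X => ih y
      refine ⟨s.biUnion t, fun p hp => ?_⟩
      have h1 : p ∈ ⋃ y ∈ s, Metric.closedBall y (2 ^ m * ε) := by
        apply hs
        have : (2:ℝ) ^ (m + 1) * ε = 2 * (2 ^ m * ε) := by ring
        rwa [this] at hp
      simp only [mem_iUnion, exists_prop] at h1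
      obtain ⟨y, hy, hpy⟩ := h1
      have h2 := ht y hpy
      simp only [mem_iUnion, exists_prop] at h2 ⊢
      obtain ⟨z, hz, hpz⟩ := h2
      exact ⟨z, Finset.mem_biUnion.2 ⟨y, hy, hz⟩, hpz⟩
  obtain ⟨m, hm⟩ : ∃ m : ℕ, R ≤ 2 ^ m * ε := by
    obtain ⟨m, hm⟩ := pow_unbounded_of_one_lt (R / ε) (by norm_num : (1:ℝ) < 2)
    exact ⟨m, by rw [div_lt_iff₀ hε] at hm; linarith [hm.le]⟩
  obtain ⟨s, hs⟩ := main m x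
  exact ⟨s, (closedBall_subset_closedBall hm).trans hs⟩

/-- Separated subsets of balls are finite. -/
lemma finite_sep
    (hFD : ∀ (x : X) (ρ : ℝ), ∃ s : Finset X,
      Metric.closedBall x (2 * ρ) ⊆ ⋃ y ∈ s, Metric.closedBall y ρ)
    {s : Set X} {x : X} {R δ : ℝ} (hδ : 0 < δ)
    (hsub : s ⊆ Metric.closedBall x R)
    (hsep : ∀ a ∈ s, ∀ b ∈ s, a ≠ b → δ ≤ dist a b) : s.Finite := by
  obtain ⟨t, ht⟩ := cover_of_hFD hFD x R (δ/3) (by linarith)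
  have key : ∀ p ∈ s, ∃ y ∈ t, p ∈ Metric.closedBall y (δ/3) := by
    intro p hp
    have := ht (hsub hp)
    simpa only [mem_iUnion, exists_prop] using this
  classical
  set f : X → X := fun p => if h : ∃ y ∈ t, p ∈ Metric.closedBall y (δ/3) then h.choose else p
    with hf
  have hft : ∀ p ∈ s, f p ∈ t ∧ dist p (f p) ≤ δ/3 := by
    intro p hp
    have h := key p hp
    simp only [hf, dif_pos h]
    exact ⟨h.choose_spec.1, h.choose_spec.2⟩
  have : Set.InjOn f s := by
    intro a ha b hb hab
    by_contra hne
    have h1 := (hft a ha).2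
    have h2 := (hft b hb).2
    rw [dist_comm b (f b)] at h2
    have : dist a b ≤ δ/3 + δ/3 := by
      calc dist a b ≤ dist a (f a) + dist b (f a) := dist_triangle_right _ _ _
        _ = dist a (f a) + dist b (f b) := by rw [hab]
        _ ≤ δ/3 + δ/3 := add_le_add h1 (by rw [dist_comm]; exact h2)
    have := hsep a ha b hb hne
    linarith
  have himg : f '' s ⊆ ↑t := by
    rintro _ ⟨p, hp, rfl⟩; exact (hft p hp).1
  exact Set.Finite.of_finite_image (t.finite_toSet.subset himg) this


/-- A system of nested nets with enumerations and parent maps. -/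
structure Sys (X : Type*) [MetricSpace X] (r : ℝ) where
  M : ℤ → Set X
  g : ℤ → ℕ → X
  pi : ℤ → X → X
  x0 : X
  hg : ∀ k, Set.range (g k) = M k
  x0mem : ∀ k, x0 ∈ M k
  mono : ∀ ⦃m k : ℤ⦄, m ≤ k → M m ⊆ M k
  sep : ∀ k, ∀ x ∈ M k, ∀ y ∈ M k, x ≠ y → r ^ k ≤ dist x y
  pi_mem : ∀ k u, u ∈ M (k+1) → pi k u ∈ M k
  pi_dist : ∀ k u, u ∈ M (k+1) → dist u (pi k u) < r ^ k
  pi_eq : ∀ k u v, v ∈ M k → dist u v < r ^ k / 2 → pi k u = v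
  dense' : ∀ (y : X) (k : ℤ), ∃ n, k ≤ n ∧ ∃ v ∈ M n, dist y v < r ^ n
  finball : ∀ (z : X) (R : ℝ) (k : ℤ), (M k ∩ Metric.closedBall z R).Finite

theorem exists_sys [Nonempty X]
    (hFD : ∀ (x : X) (ρ : ℝ), ∃ s : Finset X,
      Metric.closedBall x (2 * ρ) ⊆ ⋃ y ∈ s, Metric.closedBall y ρ)
    {r : ℝ} (hr0 : 0 < r) (hr1 : r < 1) : Nonempty (Sys X r) := by
  classical
  obtain ⟨x0⟩ := ‹Nonempty X›
  -- the family encoded by birth certificates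
  set MA : Set (ℤ × X) → ℤ → Set X :=
    fun A k => insert x0 {x | ∃ m ≤ k, (m, x) ∈ A} with hMA
  set Adm : Set (Set (ℤ × X)) :=
    {A | ∀ k : ℤ, ∀ x ∈ MA A k, ∀ y ∈ MA A k, x ≠ y → r ^ k ≤ dist x y} with hAdm
  have hchain : ∀ c ⊆ Adm, IsChain (· ⊆ ·) c → c.Nonempty →
      ∃ ub ∈ Adm, ∀ s ∈ c, s ⊆ ub := by
    intro c hc hchain hne
    refine ⟨⋃₀ c, ?_, fun s hs => subset_sUnion_of_mem hs⟩
    intro k x hx y hy hxy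
    have hmem : ∀ z ∈ MA (⋃₀ c) k, z = x0 ∨ ∃ A ∈ c, z ∈ MA A k := by
      intro z hz
      rcases hz with hz | hz
      · exact Or.inl hz
      · obtain ⟨m, hm, hmem⟩ := hz
        obtain ⟨A, hA, hzA⟩ := hmem
        exact Or.inr ⟨A, hA, Or.inr ⟨m, hm, hzA⟩⟩
    obtain ⟨A0, hA0⟩ := hne
    rcases hmem x hx with hxe | ⟨A, hA, hxA⟩
    · rcases hmem y hy with hye | ⟨B, hB, hyB⟩
      · exact absurd (hxe.trans hye.symm) hxy
      · exact hc hB k x (Or.inl hxe) y hyB hxy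
    · rcases hmem y hy with hye | ⟨B, hB, hyB⟩
      · exact hc hA k x hxA y (Or.inl hye) hxy
      · rcases hchain.total hA hB with hAB | hBA
        · refine hc hB k x ?_ y hyB hxy
          rcases hxA with h | ⟨m, hm, hmm⟩
          · exact Or.inl h
          · exact Or.inr ⟨m, hm, hAB hmm⟩
        · refine hc hA k x hxA y ?_ hxy
          rcases hyB with h | ⟨m, hm, hmm⟩
          · exact Or.inl h
          · exact Or.inr ⟨m, hm, hBA hmm⟩
  have hempty : (∅ : Set (ℤ × X)) ∈ Adm := by
    intro k x hx y hy hxy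
    rcases hx with rfl | ⟨m, hm, h⟩
    · rcases hy with rfl | ⟨m, hm, h⟩
      · exact absurd rfl hxy
      · exact absurd h (by simp)
    · exact absurd h (by simp)
  obtain ⟨A, -, hAadm, hAmax⟩ :
      ∃ A, (∅ : Set (ℤ × X)) ⊆ A ∧ A ∈ Adm ∧ ∀ B ∈ Adm, A ⊆ B → B ⊆ A := by
    obtain ⟨A, h1, h2⟩ := zorn_subset_nonempty Adm hchain ∅ hempty
    exact ⟨A, h1, h2.1, fun B hB hAB => h2.2 hB hAB⟩
  set M : ℤ → Set X := MA A with hM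
  have hMmono : ∀ ⦃m k : ℤ⦄, m ≤ k → M m ⊆ M k := by
    intro m k hmk x hx
    rcases hx with h | ⟨m', hm', h⟩
    · exact Or.inl h
    · exact Or.inr ⟨m', hm'.trans hmk, h⟩
  have hMsep : ∀ k, ∀ x ∈ M k, ∀ y ∈ M k, x ≠ y → r ^ k ≤ dist x y := hAadm
  have hx0 : ∀ k, x0 ∈ M k := fun k => Or.inl rfl
  -- maximality key
  have key : ∀ (k : ℤ) (u : X), u ∉ M k →
      ∃ m, k ≤ m ∧ ∃ v ∈ M m, v ≠ u ∧ dist u v < r ^ m := by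
    intro k u hu
    by_contra hcon
    push_neg at hcon
    have hadm : insert (k, u) A ∈ Adm := by
      intro m x hx y hy hxy
      have hmem : ∀ z, z ∈ MA (insert (k, u) A) m → z ∈ M m ∨ (z = u ∧ k ≤ m) := by
        intro z hz
        rcases hz with rfl | ⟨m', hm', hz⟩
        · exact Or.inl (Or.inl rfl)
        · rcases hz with h | h
          · have h1 : m' = k := congrArg Prod.fst h
            have h2 : z = u := congrArg Prod.snd h
            exact Or.inr ⟨h2, h1 ▸ hm'⟩
          · exact Or.inl (Or.inr ⟨m', hm', h⟩)
      rcases hmem x hx with hx' | ⟨hxu, hkm⟩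
      · rcases hmem y hy with hy' | ⟨hyu, hkm'⟩
        · exact hMsep m x hx' y hy' hxy
        · subst hyu
          have := hcon m hkm' x hx' hxy
          rwa [dist_comm] at this
      · rcases hmem y hy with hy' | ⟨hyu, hkm'⟩
        · subst hxu
          exact hcon m hkm y hy' (fun h => hxy h.symm)
        · exact absurd (hxu.trans hyu.symm) hxy
    have : insert (k, u) A ⊆ A := hAmax _ hadm (subset_insert _ _)
    have : (k, u) ∈ A := this (mem_insert _ _)
    exact hu (Or.inr ⟨k, le_refl k, this⟩)
  have hnear : ∀ k, ∀ u ∈ M (k+1), ∃ v ∈ M k, dist u v < r ^ k := by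
    intro k u hu
    by_cases huk : u ∈ M k
    · exact ⟨u, huk, by simpa using zpow_pos hr0 k⟩
    · obtain ⟨m, hkm, v, hv, hvu, hd⟩ := key k u huk
      rcases eq_or_lt_of_le hkm with rfl | hlt
      · exact ⟨v, hv, hd⟩
      · exfalso
        have hum : u ∈ M m := hMmono hlt hu
        have := hMsep m u hum v hv (Ne.symm hvu)
        linarith
  have hdense : ∀ (y : X) (k : ℤ), ∃ n, k ≤ n ∧ ∃ v ∈ M n, dist y v < r ^ n := by
    intro y k
    by_cases hy : ∃ n, k ≤ n ∧ y ∈ M n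
    · obtain ⟨n, hkn, hyn⟩ := hy
      exact ⟨n, hkn, y, hyn, by simpa using zpow_pos hr0 n⟩
    · push_neg at hy
      obtain ⟨m, hkm, v, hv, hvu, hd⟩ := key k y (hy k le_rfl)
      exact ⟨m, hkm, v, hv, hd⟩
  have hfin : ∀ (z : X) (R : ℝ) (k : ℤ), (M k ∩ Metric.closedBall z R).Finite := by
    intro z R k
    refine finite_sep hFD (zpow_pos hr0 k) (Set.inter_subset_right) ?_
    intro a ha b hb hab
    exact hMsep k a ha.1 b hb.1 hab
  have hcount : ∀ k, (M k).Countable := by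
    intro k
    have : M k ⊆ ⋃ n : ℕ, (M k ∩ Metric.closedBall x0 n) := by
      intro x hx
      obtain ⟨n, hn⟩ := exists_nat_ge (dist x x0)
      exact mem_iUnion.2 ⟨n, hx, by simpa [Metric.mem_closedBall] using hn⟩
    exact (Set.countable_iUnion fun n : ℕ => (hfin x0 (n : ℝ) k).countable).mono this
  have hgex : ∀ k, ∃ g : ℕ → X, M k = Set.range g :=
    fun k => (hcount k).exists_eq_range ⟨x0, hx0 k⟩
  choose g hgspec using hgex
  -- parent map
  set pi : ℤ → X → X := fun k u =>
    if h1 : ∃ j, dist u (g k j) < r ^ k / 2 then g k (Nat.find h1)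
    else if h2 : ∃ j, dist u (g k j) < r ^ k then g k (Nat.find h2)
    else x0 with hpi
  have hgmem : ∀ k j, g k j ∈ M k := by
    intro k j; rw [hgspec k]; exact ⟨j, rfl⟩
  have hpi_mem : ∀ k u, pi k u ∈ M k := by
    intro k u
    simp only [hpi]
    split
    · exact hgmem _ _
    · split
      · exact hgmem _ _
      · exact hx0 k
  have hpi_dist : ∀ k u, u ∈ M (k+1) → dist u (pi k u) < r ^ k := by
    intro k u hu
    obtain ⟨v, hv, hd⟩ := hnear k u hu
    obtain ⟨j, hj⟩ : ∃ j, g k j = v := by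
      have := hv; rw [hgspec k] at this; exact this.imp (fun j h => h)
    have h2 : ∃ j, dist u (g k j) < r ^ k := ⟨j, by rwa [hj]⟩
    simp only [hpi]
    split
    · next h1 =>
      have := Nat.find_spec h1
      have hhalf : r ^ k / 2 < r ^ k := by
        have := zpow_pos hr0 k; linarith
      linarith
    · next h1 => exact Nat.find_spec h2
  have hpi_eq : ∀ k u v, v ∈ M k → dist u v < r ^ k / 2 → pi k u = v := by
    intro k u v hv hd
    obtain ⟨j, hj⟩ : ∃ j, g k j = v := by
      have := hv; rw [hgspec k] at this; exact this.imp (fun j h => h)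
    have h1 : ∃ j, dist u (g k j) < r ^ k / 2 := ⟨j, by rwa [hj]⟩
    simp only [hpi, dif_pos h1]
    have hs := Nat.find_spec h1
    by_contra hne
    have h1m : g k (Nat.find h1) ∈ M k := hgmem _ _
    have := hMsep k _ h1m v hv hne
    have : r ^ k ≤ dist (g k (Nat.find h1)) v := this
    have htri : dist (g k (Nat.find h1)) v ≤ dist u (g k (Nat.find h1)) + dist u v :=
      dist_triangle_left _ _ _
    linarith
  exact ⟨⟨M, g, pi, x0, fun k => (hgspec k).symm, hx0, hMmono, hMsep,
    fun k u _ => hpi_mem k u, hpi_dist, hpi_eq, hdense, hfin⟩⟩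
namespace Sys

variable {X : Type*} [MetricSpace X] {r : ℝ}

/-- Iterated parent map: descend `n` levels starting from level `K`. -/
def down (S : Sys X r) : ℕ → ℤ → X → X
  | 0, _, u => u
  | (n+1), K, u => S.pi (K - n - 1) (S.down n K u)

lemma down_mem (S : Sys X r) : ∀ (n : ℕ) (K : ℤ) (u : X), u ∈ S.M K →
    S.down n K u ∈ S.M (K - n) := by
  intro n
  induction n with
  | zero => intro K u hu; simpa [down] using hu
  | succ n ih =>
    intro K u hu
    have h1 : S.down n K u ∈ S.M (K - n) := ih K u hu
    have h2 : S.down (n+1) K u = S.pi (K - n - 1) (S.down n K u) := rfl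
    rw [h2]
    have h3 : (K : ℤ) - (n:ℤ) - 1 + 1 = K - n := by ring
    have := S.pi_mem (K - n - 1) (S.down n K u) (by rw [h3]; exact h1)
    have h4 : (K : ℤ) - ((n:ℕ)+1 : ℕ) = K - n - 1 := by push_cast; ring
    rwa [h4]

lemma down_dist (S : Sys X r) (hr0 : 0 < r) (hr1 : r < 1) :
    ∀ (n : ℕ) (K : ℤ) (u : X), u ∈ S.M K →
    dist (S.down n K u) u < r ^ (K - n) / (1 - r) := by
  intro n
  induction n with
  | zero =>
    intro K u hu
    simp only [down, dist_self]
    have : (K : ℤ) - (0:ℕ) = K := by simp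
    rw [this]
    exact div_pos (zpow_pos hr0 K) (by linarith)
  | succ n ih =>
    intro K u hu
    have hv := S.down_mem n K u hu
    have h3 : (K : ℤ) - (n:ℤ) - 1 + 1 = K - n := by ring
    have hstep := S.pi_dist (K - n - 1) (S.down n K u) (by rw [h3]; exact hv)
    have hih := ih K u hu
    have htri : dist (S.down (n+1) K u) u ≤
        dist (S.pi (K - n - 1) (S.down n K u)) (S.down n K u) + dist (S.down n K u) u :=
      dist_triangle _ _ _
    rw [dist_comm] at hstep
    have hpow : r ^ ((K:ℤ) - (n:ℤ)) = r ^ ((K:ℤ) - n - 1) * r := by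
      rw [← zpow_add_one₀ (ne_of_gt hr0)]; ring_nf
    have hcast : (K : ℤ) - ((n:ℕ)+1 : ℕ) = K - n - 1 := by push_cast; ring
    rw [hcast]
    have hkey : r ^ ((K:ℤ) - n - 1) + r ^ ((K:ℤ) - n) / (1 - r) = r ^ ((K:ℤ) - n - 1) / (1-r) := by
      have h1r : (1:ℝ) - r ≠ 0 := by linarith
      rw [hpow]; field_simp; ring
    calc dist (S.down (n+1) K u) u
        ≤ dist (S.pi (K - n - 1) (S.down n K u)) (S.down n K u) + dist (S.down n K u) u := htri
      _ < r ^ ((K:ℤ) - n - 1) + r ^ ((K:ℤ) - n) / (1 - r) := add_lt_add hstep hih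
      _ = r ^ ((K:ℤ) - n - 1) / (1-r) := hkey

lemma down_succ (S : Sys X r) (hr0 : 0 < r) :
    ∀ (n : ℕ) (K : ℤ) (u : X), u ∈ S.M K → S.down (n+1) (K+1) u = S.down n K u := by
  intro n
  induction n with
  | zero =>
    intro K u hu
    show S.pi (K + 1 - 0 - 1) (S.down 0 (K+1) u) = u
    have h1 : (K:ℤ) + 1 - 0 - 1 = K := by ring
    rw [h1]
    exact S.pi_eq K u u hu (by rw [dist_self]; positivity)
  | succ n ih =>
    intro K u hu
    show S.pi (K + 1 - (n+1) - 1) (S.down (n+1) (K+1) u) = S.down (n+1) K u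
    rw [ih K u hu]
    have h1 : (K:ℤ) + 1 - ((n:ℤ)+1) - 1 = K - n - 1 := by ring
    rw [h1]
    rfl

lemma down_add (S : Sys X r) :
    ∀ (n m : ℕ) (K : ℤ) (u : X), S.down (m+n) K u = S.down n (K - m) (S.down m K u) := by
  intro n
  induction n with
  | zero => intro m K u; rfl
  | succ n ih =>
    intro m K u
    show S.pi (K - (m+n : ℕ) - 1) (S.down (m+n) K u) = S.down (n+1) (K - m) (S.down m K u)
    rw [ih m K u]
    show _ = S.pi ((K - m) - n - 1) (S.down n (K - m) (S.down m K u))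
    congr 1
    push_cast; ring

lemma down_shift (S : Sys X r) (hr0 : 0 < r) :
    ∀ (m n : ℕ) (K : ℤ) (u : X), u ∈ S.M K → S.down (n+m) (K+m) u = S.down n K u := by
  intro m
  induction m with
  | zero => intro n K u hu; simp
  | succ m ih =>
    intro n K u hu
    have h1 : n + (m+1) = (n+m) + 1 := by ring
    have h2 : (K:ℤ) + ((m:ℕ)+1:ℕ) = (K + m) + 1 := by push_cast; ring
    rw [h1, h2]
    have hu' : u ∈ S.M (K + m) := S.mono (by omega) hu
    rw [S.down_succ hr0 (n+m) (K+m) u hu']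
    exact ih n K u hu

/-- The set of net-descendants of `x ∈ M k`. -/
def D (S : Sys X r) (k : ℤ) (x : X) : Set X :=
  {u | ∃ n : ℕ, u ∈ S.M (k + n) ∧ S.down n (k + n) u = x}

lemma D_self (S : Sys X r) {k : ℤ} {x : X} (hx : x ∈ S.M k) : x ∈ S.D k x :=
  ⟨0, by simpa using hx, rfl⟩

lemma D_mem_M (S : Sys X r) {k : ℤ} {x u : X} (hu : u ∈ S.D k x) : x ∈ S.M k := by
  obtain ⟨n, hu1, hu2⟩ := hu
  have := S.down_mem n (k + n) u hu1
  rw [hu2] at this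
  simpa using this

lemma D_dist (S : Sys X r) (hr0 : 0 < r) (hr1 : r < 1) {k : ℤ} {x u : X}
    (hu : u ∈ S.D k x) : dist u x < r ^ k / (1 - r) := by
  obtain ⟨n, hu1, hu2⟩ := hu
  have := S.down_dist hr0 hr1 n (k + n) u hu1
  rw [hu2] at this
  rw [dist_comm] at this
  have h : (k : ℤ) + n - n = k := by ring
  rwa [h] at this

lemma D_unique (S : Sys X r) (hr0 : 0 < r) {k : ℤ} {x x' u : X}
    (h1 : u ∈ S.D k x) (h2 : u ∈ S.D k x') : x = x' := by
  obtain ⟨n, hm, hd⟩ := h1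
  obtain ⟨n', hm', hd'⟩ := h2
  rcases le_total n n' with h | h
  · rw [← hd, ← hd']
    have he : n' = n + (n' - n) := by omega
    have he2 : (k : ℤ) + ((n + (n' - n) : ℕ) : ℤ) = (k + n) + ((n' - n : ℕ) : ℤ) := by
      push_cast; ring
    rw [he, he2, S.down_shift hr0 (n' - n) n (k + n) u hm]
  · rw [← hd, ← hd']
    have he : n = n' + (n - n') := by omega
    have he2 : (k : ℤ) + ((n' + (n - n') : ℕ) : ℤ) = (k + n') + ((n - n' : ℕ) : ℤ) := by
      push_cast; ring
    rw [he, he2, S.down_shift hr0 (n - n') n' (k + n') u hm']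

lemma D_anc (S : Sys X r) (hr0 : 0 < r) (n : ℕ) (K : ℤ) (x : X) :
    S.D K x ⊆ S.D (K - n) (S.down n K x) := by
  rintro u ⟨m, hu1, hu2⟩
  refine ⟨n + m, ?_, ?_⟩
  · have h : (K : ℤ) - n + (n + m : ℕ) = K + m := by push_cast; ring
    rw [h]; exact hu1
  · have h : (K : ℤ) - n + (n + m : ℕ) = K + m := by push_cast; ring
    rw [h]
    have h2 : n + m = m + n := by ring
    rw [h2, S.down_add n m (K + m) u]
    have h3 : (K : ℤ) + m - m = K := by ring
    rw [h3, hu2]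

end Sys
namespace Sys

variable {X : Type*} [MetricSpace X] {r : ℝ}

/-- The children of `x` at level `k+1`. -/
def ch (S : Sys X r) (k : ℤ) (x : X) : Set X := {u | u ∈ S.M (k+1) ∧ S.pi k u = x}

lemma ch_finite (S : Sys X r) (hr0 : 0 < r) (k : ℤ) (x : X) : (S.ch k x).Finite := by
  refine (S.finball x (r ^ k) (k+1)).subset ?_
  rintro u ⟨hu, hpiu⟩
  refine ⟨hu, ?_⟩
  have := S.pi_dist k u hu
  rw [hpiu] at this
  exact Metric.mem_closedBall.2 this.le

lemma D_decomp (S : Sys X r) (hr0 : 0 < r) {k : ℤ} {x : X} (hx : x ∈ S.M k) :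
    S.D k x = ⋃ u ∈ S.ch k x, S.D (k+1) u := by
  ext v
  constructor
  · rintro ⟨n, hv1, hv2⟩
    cases n with
    | zero =>
      have hvx : v = x := hv2
      subst hvx
      refine mem_iUnion₂.2 ⟨v, ⟨S.mono (by omega) hx, S.pi_eq k v v hx (by rw [dist_self]; positivity)⟩, ?_⟩
      exact S.D_self (S.mono (by omega) hx)
    | succ m =>
      set u := S.down m (k + (m+1 : ℕ)) v with hu
      have hmem : u ∈ S.M (k+1) := by
        have := S.down_mem m (k + (m+1 : ℕ)) v hv1
        have hc : (k : ℤ) + ((m+1 : ℕ) : ℤ) - (m : ℤ) = k + 1 := by push_cast; ring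
        rwa [hc] at this
      have hpi : S.pi k u = x := by
        rw [← hv2]
        show S.pi k u = S.pi (k + ((m:ℕ)+1 : ℕ) - m - 1) (S.down m (k + (m+1:ℕ)) v)
        congr 1
        push_cast; ring
      have hc : (k : ℤ) + 1 + ((m:ℕ) : ℤ) = k + ((m+1 : ℕ) : ℤ) := by push_cast; ring
      refine mem_iUnion₂.2 ⟨u, ⟨hmem, hpi⟩, m, ?_, ?_⟩
      · rw [hc]; exact hv1
      · rw [hc]
  · intro hv
    obtain ⟨u, ⟨hu1, hu2⟩, m, hv1, hv2⟩ := mem_iUnion₂.1 hv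
    refine ⟨m + 1, ?_, ?_⟩
    · have hc : (k : ℤ) + ((m+1 : ℕ) : ℤ) = k + 1 + (m : ℤ) := by push_cast; ring
      rwa [hc]
    · show S.pi (k + ((m:ℕ)+1:ℕ) - m - 1) (S.down m (k + ((m+1:ℕ))) v) = x
      have hc : (k : ℤ) + (((m:ℕ)+1:ℕ) : ℤ) - (m:ℤ) - 1 = k := by push_cast; ring
      rw [hc]
      have : S.down m (k + ((m+1:ℕ) : ℤ)) v = S.down m (k + 1 + (m:ℕ)) v := by
        congr 1; push_cast; ring
      rw [this, hv2, hu2]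

lemma closure_D_decomp (S : Sys X r) (hr0 : 0 < r) {k : ℤ} {x : X} (hx : x ∈ S.M k) :
    closure (S.D k x) = ⋃ u ∈ S.ch k x, closure (S.D (k+1) u) := by
  rw [S.D_decomp hr0 hx, (S.ch_finite hr0 k x).closure_biUnion]

/-- The cube-membership relation: `x` is a level-`k` владелец candidate for `z`. -/
def CC (S : Sys X r) (k : ℤ) (z x : X) : Prop := x ∈ S.M k ∧ z ∈ closure (S.D k x)

lemma CC_child (S : Sys X r) (hr0 : 0 < r) {k : ℤ} {z x : X} (h : S.CC k z x) :
    ∃ u, u ∈ S.M (k+1) ∧ S.pi k u = x ∧ S.CC (k+1) z u := by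
  obtain ⟨hx, hz⟩ := h
  rw [S.closure_D_decomp hr0 hx] at hz
  obtain ⟨u, ⟨hu1, hu2⟩, hzu⟩ := mem_iUnion₂.1 hz
  exact ⟨u, hu1, hu2, hu1, hzu⟩

lemma CC_anc (S : Sys X r) (hr0 : 0 < r) (n : ℕ) {K : ℤ} {z x : X} (h : S.CC K z x) :
    S.CC (K - n) z (S.down n K x) := by
  refine ⟨S.down_mem n K x h.1, ?_⟩
  exact closure_mono (S.D_anc hr0 n K x) h.2

lemma CC_nonempty (S : Sys X r) (hr0 : 0 < r) (hr1 : r < 1) (z : X) (k : ℤ) :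
    ∃ x, S.CC k z x := by
  have h1r : (0:ℝ) < 1 - r := by linarith
  choose n hn v hv hd using fun j : ℕ => S.dense' z (k + j)
  have hk : ∀ j : ℕ, k ≤ n j := fun j => le_trans (by omega) (hn j)
  set w : ℕ → X := fun j => S.down (n j - k).toNat (n j) (v j) with hw
  have hcast : ∀ j : ℕ, ((n j - k).toNat : ℤ) = n j - k := fun j =>
    Int.toNat_of_nonneg (by have := hk j; omega)
  have hwM : ∀ j, w j ∈ S.M k := by
    intro j
    have := S.down_mem (n j - k).toNat (n j) (v j) (hv j)
    rwa [hcast j, show n j - (n j - k) = k by ring] at this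
  have hwR : ∀ j, w j ∈ Metric.closedBall z (r ^ k / (1 - r) + r ^ k) := by
    intro j
    have h1 : dist (w j) (v j) < r ^ (n j - (n j - k)) / (1 - r) := by
      have := S.down_dist hr0 hr1 (n j - k).toNat (n j) (v j) (hv j)
      rwa [hcast j] at this
    rw [show n j - (n j - k) = k by ring] at h1
    have h2 : dist z (v j) < r ^ k := by
      have hle : r ^ (n j) ≤ r ^ k :=
        zpow_le_zpow_right_of_le_one₀ hr0 hr1.le (hk j)
      exact lt_of_lt_of_le (hd j) hle
    have : dist (w j) z ≤ dist (w j) (v j) + dist z (v j) := by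
      rw [dist_comm z (v j)]; exact dist_triangle _ _ _
    rw [Metric.mem_closedBall]
    have := this.trans_lt (add_lt_add h1 h2)
    linarith
  have hF : (S.M k ∩ Metric.closedBall z (r ^ k / (1 - r) + r ^ k)).Finite :=
    S.finball z (r ^ k / (1 - r) + r ^ k) k
  have hfib : ∃ x ∈ S.M k ∩ Metric.closedBall z (r ^ k / (1 - r) + r ^ k),
      {j : ℕ | w j = x}.Infinite := by
    by_contra hcon
    push_neg at hcon
    have hunion : (Set.univ : Set ℕ) ⊆
        ⋃ x ∈ S.M k ∩ Metric.closedBall z (r ^ k / (1 - r) + r ^ k), {j | w j = x} :=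
      fun j _ => mem_iUnion₂.2 ⟨w j, ⟨hwM j, hwR j⟩, rfl⟩
    have : (Set.univ : Set ℕ).Finite :=
      (hF.biUnion fun x hx => hcon x hx).subset hunion
    exact Set.infinite_univ this
  obtain ⟨x, hxF, hinf⟩ := hfib
  refine ⟨x, hxF.1, ?_⟩
  rw [Metric.mem_closure_iff]
  intro ε hε
  obtain ⟨J, hJ⟩ : ∃ J : ℕ, r ^ J < ε / r ^ k := by
    exact exists_pow_lt_of_lt_one (div_pos hε (zpow_pos hr0 k)) hr1
  obtain ⟨j, hjmem, hjJ⟩ := hinf.exists_gt J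
  refine ⟨v j, ⟨(n j - k).toNat, ?_, ?_⟩, ?_⟩
  · rw [show (k + ((n j - k).toNat : ℤ)) = n j by rw [hcast j]; ring]
    exact hv j
  · rw [show (k + ((n j - k).toNat : ℤ)) = n j by rw [hcast j]; ring]
    exact hjmem
  · have h1 : dist z (v j) < r ^ (n j) := hd j
    have h2 : r ^ (n j) ≤ r ^ (k + (J:ℤ)) := by
      refine zpow_le_zpow_right_of_le_one₀ hr0 hr1.le ?_
      have := hn j
      omega
    have h3 : r ^ (k + (J:ℤ)) = r ^ k * r ^ J := by
      rw [zpow_add₀ (ne_of_gt hr0), zpow_natCast]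
    have h4 : r ^ k * r ^ J < ε := by
      rw [mul_comm]
      exact (lt_div_iff₀ (zpow_pos hr0 k)).1 hJ
    linarith
  
lemma notin_closure_of_ball (S : Sys X r) (hr0 : 0 < r) (hr1 : r < 1)
    {k : ℤ} {x x' z : X} (hx : x ∈ S.M k) (hx' : x' ∈ S.M k) (hne : x' ≠ x)
    (hz : dist z x < (1/2 - r/(1-r)) * r ^ k) : z ∉ closure (S.D k x') := by
  have h1r : (0:ℝ) < 1 - r := by linarith
  have hrk : (0:ℝ) < r ^ k := zpow_pos hr0 k
  intro hcl
  have hεpos : 0 < (1/2 - r/(1-r)) * r ^ k - dist z x := by linarith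
  obtain ⟨u, hu, hdzu⟩ := Metric.mem_closure_iff.1 hcl _ hεpos
  obtain ⟨m, hum, hud⟩ := hu
  cases m with
  | zero =>
    have hux : u = x' := hud
    subst hux
    have hsep := S.sep k u hx' x hx hne
    have htri : dist u x ≤ dist z u + dist z x := dist_triangle_left _ _ _
    have hrr : 0 < r / (1 - r) := div_pos hr0 h1r
    nlinarith [hsep, hrr, hrk, htri, hdzu]
  | succ m =>
    obtain ⟨v, hvm, hpiv, hdvu⟩ :
        ∃ v, v ∈ S.M (k+1) ∧ S.pi k v = x' ∧ dist v u < r ^ (k+1) / (1 - r) := by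
      refine ⟨S.down m (k + ((m+1 : ℕ) : ℤ)) u, ?_, ?_, ?_⟩
      · have := S.down_mem m (k + ((m+1 : ℕ) : ℤ)) u hum
        rwa [show (k + ((m+1 : ℕ) : ℤ) - (m:ℤ)) = k + 1 by push_cast; ring] at this
      · rw [← hud]
        show S.pi k _ = S.pi (k + (((m:ℕ)+1:ℕ) : ℤ) - m - 1) (S.down m (k + ((m+1:ℕ) : ℤ)) u)
        congr 1
        push_cast; ring
      · have := S.down_dist hr0 hr1 m (k + ((m+1 : ℕ) : ℤ)) u hum
        rwa [show (k + ((m+1 : ℕ) : ℤ) - (m:ℤ)) = k + 1 by push_cast; ring] at this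
    have hkey : r ^ (k+1) / (1 - r) + (1/2 - r/(1-r)) * r ^ k = r ^ k / 2 := by
      have : r ^ (k+1) = r ^ k * r := by rw [zpow_add_one₀ (ne_of_gt hr0)]
      rw [this]; field_simp; ring
    have hdvx : dist v x < r ^ k / 2 := by
      have htri : dist v x ≤ dist v u + dist u z + dist z x := dist_triangle4 _ _ _ _
      rw [dist_comm u z] at htri
      linarith [htri, hdvu, hdzu, hkey]
    have := S.pi_eq k v x hx hdvx
    rw [hpiv] at this
    exact hne this

end Sys
namespace Sys

variable {X : Type*} [MetricSpace X] {r : ℝ}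

lemma exg (S : Sys X r) {k : ℤ} {x : X} (hx : x ∈ S.M k) : ∃ j, S.g k j = x := by
  rw [← S.hg k] at hx; exact hx

lemma ex0 (S : Sys X r) (hr0 : 0 < r) (hr1 : r < 1) (z : X) :
    ∃ j, S.CC 0 z (S.g 0 j) := by
  obtain ⟨x, hx⟩ := S.CC_nonempty hr0 hr1 z 0
  obtain ⟨j, hj⟩ := S.exg hx.1
  exact ⟨j, hj ▸ hx⟩

/-- Minimal-index selection of owners, from level `0` upwards. -/
noncomputable def upIdx (S : Sys X r) (hr0 : 0 < r) (hr1 : r < 1) : ℕ → X → ℕ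
  | 0, z => Nat.find (S.ex0 hr0 hr1 z)
  | (n+1), z =>
      if h : ∃ j, S.CC ((n:ℤ)+1) z (S.g ((n:ℤ)+1) j) ∧
          S.pi n (S.g ((n:ℤ)+1) j) = S.g n (S.upIdx hr0 hr1 n z)
      then Nat.find h else 0

lemma up_cc (S : Sys X r) (hr0 : 0 < r) (hr1 : r < 1) :
    ∀ (n : ℕ) (z : X), S.CC n z (S.g n (S.upIdx hr0 hr1 n z)) := by
  intro n
  induction n with
  | zero =>
    intro z
    have := Nat.find_spec (S.ex0 hr0 hr1 z)
    simpa [upIdx] using this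
  | succ n ih =>
    intro z
    have hex : ∃ j, S.CC ((n:ℤ)+1) z (S.g ((n:ℤ)+1) j) ∧
        S.pi n (S.g ((n:ℤ)+1) j) = S.g n (S.upIdx hr0 hr1 n z) := by
      obtain ⟨u, huM, hupi, hucc⟩ := S.CC_child hr0 (ih z)
      obtain ⟨j, hj⟩ := S.exg huM
      exact ⟨j, hj ▸ hucc, hj ▸ hupi⟩
    have heq : S.upIdx hr0 hr1 (n+1) z = Nat.find hex := by
      rw [upIdx, dif_pos hex]
    rw [heq]
    have := (Nat.find_spec hex).1
    have hc : ((n+1 : ℕ) : ℤ) = (n:ℤ)+1 := by push_cast; ring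
    rwa [hc]

lemma up_ex (S : Sys X r) (hr0 : 0 < r) (hr1 : r < 1) (n : ℕ) (z : X) :
    ∃ j, S.CC ((n:ℤ)+1) z (S.g ((n:ℤ)+1) j) ∧
      S.pi n (S.g ((n:ℤ)+1) j) = S.g n (S.upIdx hr0 hr1 n z) := by
  obtain ⟨u, huM, hupi, hucc⟩ := S.CC_child hr0 (S.up_cc hr0 hr1 n z)
  obtain ⟨j, hj⟩ := S.exg huM
  exact ⟨j, hj ▸ hucc, hj ▸ hupi⟩

lemma upIdx_succ_iff (S : Sys X r) (hr0 : 0 < r) (hr1 : r < 1) (n : ℕ) (z : X) (j : ℕ) :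
    S.upIdx hr0 hr1 (n+1) z = j ↔
      ((S.CC ((n:ℤ)+1) z (S.g ((n:ℤ)+1) j) ∧
          S.pi n (S.g ((n:ℤ)+1) j) = S.g n (S.upIdx hr0 hr1 n z)) ∧
        ∀ i < j, ¬(S.CC ((n:ℤ)+1) z (S.g ((n:ℤ)+1) i) ∧
          S.pi n (S.g ((n:ℤ)+1) i) = S.g n (S.upIdx hr0 hr1 n z))) := by
  have hex := S.up_ex hr0 hr1 n z
  have heq : S.upIdx hr0 hr1 (n+1) z = Nat.find hex := by
    rw [upIdx, dif_pos hex]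
  rw [heq]
  exact Nat.find_eq_iff hex

lemma up_link (S : Sys X r) (hr0 : 0 < r) (hr1 : r < 1) (n : ℕ) (z : X) :
    S.pi n (S.g ((n:ℤ)+1) (S.upIdx hr0 hr1 (n+1) z)) = S.g n (S.upIdx hr0 hr1 n z) := by
  have hex := S.up_ex hr0 hr1 n z
  have heq : S.upIdx hr0 hr1 (n+1) z = Nat.find hex := by
    rw [upIdx, dif_pos hex]
  rw [heq]
  exact (Nat.find_spec hex).2

/-- The owner of `z` at level `k`. -/
noncomputable def sel (S : Sys X r) (hr0 : 0 < r) (hr1 : r < 1) : ℤ → X → X := fun k z =>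
  if 0 ≤ k then S.g k (S.upIdx hr0 hr1 k.toNat z)
  else S.down (-k).toNat 0 (S.g 0 (S.upIdx hr0 hr1 0 z))

lemma sel_nonpos (S : Sys X r) (hr0 : 0 < r) (hr1 : r < 1) {k : ℤ} (hk : k ≤ 0) (z : X) :
    S.sel hr0 hr1 k z = S.down (-k).toNat 0 (S.g 0 (S.upIdx hr0 hr1 0 z)) := by
  rcases eq_or_lt_of_le hk with rfl | hk'
  · simp [sel, down]
  · rw [sel, if_neg (by omega)]

lemma sel_cc (S : Sys X r) (hr0 : 0 < r) (hr1 : r < 1) (k : ℤ) (z : X) :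
    S.CC k z (S.sel hr0 hr1 k z) := by
  by_cases hk : 0 ≤ k
  · rw [sel, if_pos hk]
    have := S.up_cc hr0 hr1 k.toNat z
    rwa [Int.toNat_of_nonneg hk] at this
  · rw [sel, if_neg hk]
    have := S.CC_anc hr0 (-k).toNat (S.up_cc hr0 hr1 0 z)
    have hc : ((0:ℕ):ℤ) - ((-k).toNat : ℤ) = k := by omega
    rwa [show ((0:ℕ):ℤ) = (0:ℤ) by simp, show (0:ℤ) - ((-k).toNat : ℤ) = k by omega] at this
  
lemma sel_step (S : Sys X r) (hr0 : 0 < r) (hr1 : r < 1) (k : ℤ) (z : X) :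
    S.pi k (S.sel hr0 hr1 (k+1) z) = S.sel hr0 hr1 k z := by
  by_cases hk : 0 ≤ k
  · simp only [sel]
    rw [if_pos (show (0:ℤ) ≤ k + 1 by omega), if_pos hk]
    have h1 : (k+1).toNat = k.toNat + 1 := by omega
    have h2 : ((k.toNat : ℕ) : ℤ) = k := Int.toNat_of_nonneg hk
    have := S.up_link hr0 hr1 k.toNat z
    rw [h2] at this
    rw [h1]
    exact this
  · push_neg at hk
    rw [S.sel_nonpos hr0 hr1 (by omega) z, S.sel_nonpos hr0 hr1 (by omega) z]
    have hm : (-k).toNat = (-(k+1)).toNat + 1 := by omega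
    rw [hm]
    show S.pi k _ = S.pi ((0:ℤ) - ((-(k+1)).toNat : ℤ) - 1)
      (S.down (-(k+1)).toNat 0 (S.g 0 (S.upIdx hr0 hr1 0 z)))
    congr 1
    omega

lemma sel_coh (S : Sys X r) (hr0 : 0 < r) (hr1 : r < 1) :
    ∀ (n : ℕ) (k : ℤ) (z : X), S.down n k (S.sel hr0 hr1 k z) = S.sel hr0 hr1 (k - n) z := by
  intro n
  induction n with
  | zero => intro k z; simp [down]
  | succ n ih =>
    intro k z
    show S.pi (k - n - 1) (S.down n k (S.sel hr0 hr1 k z)) = _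
    rw [ih k z]
    have := S.sel_step hr0 hr1 (k - n - 1) z
    rw [show (k - (n:ℤ) - 1) + 1 = k - n by ring] at this
    rw [this]
    congr 1
    push_cast; ring

end Sys

namespace Sys

variable {X : Type*} [MetricSpace X] {r : ℝ}

lemma meas_CC (S : Sys X r) [MeasurableSpace X] [BorelSpace X] (k : ℤ) (x : X) :
    MeasurableSet {z | S.CC k z x} := by
  by_cases hx : x ∈ S.M k
  · have : {z | S.CC k z x} = closure (S.D k x) := by
      ext z; simp [CC, hx]
    rw [this]; exact isClosed_closure.measurableSet
  · have : {z | S.CC k z x} = ∅ := by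
      ext z; simp [CC, hx]
    rw [this]; exact MeasurableSet.empty

lemma meas_const {p : Prop} [MeasurableSpace X] : MeasurableSet {z : X | p} := by
  by_cases hp : p
  · have : {z : X | p} = Set.univ := by ext z; simp [hp]
    rw [this]; exact MeasurableSet.univ
  · have : {z : X | p} = ∅ := by ext z; simp [hp]
    rw [this]; exact MeasurableSet.empty

lemma meas_upIdx (S : Sys X r) (hr0 : 0 < r) (hr1 : r < 1)
    [MeasurableSpace X] [BorelSpace X] :
    ∀ (n : ℕ) (j : ℕ), MeasurableSet {z | S.upIdx hr0 hr1 n z = j} := by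
  intro n
  induction n with
  | zero =>
    intro j
    have hiff : ∀ z : X, S.upIdx hr0 hr1 0 z = j ↔
        (S.CC 0 z (S.g 0 j) ∧ ∀ i < j, ¬ S.CC 0 z (S.g 0 i)) := by
      intro z
      show Nat.find (S.ex0 hr0 hr1 z) = j ↔ _
      rw [Nat.find_eq_iff]
    have : {z | S.upIdx hr0 hr1 0 z = j} =
        {z | S.CC 0 z (S.g 0 j)} ∩ ⋂ (i : ℕ) (_ : i < j), {z | S.CC 0 z (S.g 0 i)}ᶜ := by
      ext z
      simp only [Set.mem_setOf_eq, Set.mem_inter_iff, Set.mem_iInter, Set.mem_compl_iff, hiff]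
    rw [this]
    exact (S.meas_CC 0 (S.g 0 j)).inter
      (MeasurableSet.biInter (Set.to_countable _) fun i _ => (S.meas_CC 0 (S.g 0 i)).compl)
  | succ n ih =>
    intro j
    have hiff := S.upIdx_succ_iff hr0 hr1 n
    have hPhi : ∀ i : ℕ, MeasurableSet {z | S.CC ((n:ℤ)+1) z (S.g ((n:ℤ)+1) i) ∧
        S.pi n (S.g ((n:ℤ)+1) i) = S.g n (S.upIdx hr0 hr1 n z)} := by
      intro i
      have : {z | S.CC ((n:ℤ)+1) z (S.g ((n:ℤ)+1) i) ∧
          S.pi n (S.g ((n:ℤ)+1) i) = S.g n (S.upIdx hr0 hr1 n z)} =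
          {z | S.CC ((n:ℤ)+1) z (S.g ((n:ℤ)+1) i)} ∩
            ⋃ (i' : ℕ), ({z | S.upIdx hr0 hr1 n z = i'} ∩
              {z : X | S.pi n (S.g ((n:ℤ)+1) i) = S.g n i'}) := by
        ext z
        simp only [Set.mem_setOf_eq, Set.mem_inter_iff, Set.mem_iUnion]
        constructor
        · rintro ⟨h1, h2⟩
          exact ⟨h1, S.upIdx hr0 hr1 n z, rfl, h2⟩
        · rintro ⟨h1, i', hi', h2⟩
          exact ⟨h1, by rw [hi']; exact h2⟩
      rw [this]
      exact (S.meas_CC _ _).inter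
        (MeasurableSet.iUnion fun i' => (ih i').inter meas_const)
    have : {z | S.upIdx hr0 hr1 (n+1) z = j} =
        {z | S.CC ((n:ℤ)+1) z (S.g ((n:ℤ)+1) j) ∧
          S.pi n (S.g ((n:ℤ)+1) j) = S.g n (S.upIdx hr0 hr1 n z)} ∩
        ⋂ (i : ℕ) (_ : i < j), {z | S.CC ((n:ℤ)+1) z (S.g ((n:ℤ)+1) i) ∧
          S.pi n (S.g ((n:ℤ)+1) i) = S.g n (S.upIdx hr0 hr1 n z)}ᶜ := by
      ext z
      simp only [Set.mem_setOf_eq, Set.mem_inter_iff, Set.mem_iInter, Set.mem_compl_iff,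
        hiff z j]
    rw [this]
    exact (hPhi j).inter
      (MeasurableSet.biInter (Set.to_countable _) fun i _ => (hPhi i).compl)

lemma meas_sel (S : Sys X r) (hr0 : 0 < r) (hr1 : r < 1)
    [MeasurableSpace X] [BorelSpace X] (k : ℤ) (x : X) :
    MeasurableSet {z | S.sel hr0 hr1 k z = x} := by
  by_cases hk : 0 ≤ k
  · have : {z | S.sel hr0 hr1 k z = x} =
        ⋃ (j : ℕ), ({z | S.upIdx hr0 hr1 k.toNat z = j} ∩ {z : X | S.g k j = x}) := by
      ext z
      simp only [Set.mem_setOf_eq, Set.mem_iUnion, Set.mem_inter_iff, sel, if_pos hk]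
      constructor
      · intro h; exact ⟨_, rfl, h⟩
      · rintro ⟨j, hj, h⟩; rw [hj]; exact h
    rw [this]
    exact MeasurableSet.iUnion fun j => (S.meas_upIdx hr0 hr1 _ j).inter meas_const
  · have : {z | S.sel hr0 hr1 k z = x} =
        ⋃ (j : ℕ), ({z | S.upIdx hr0 hr1 0 z = j} ∩
          {z : X | S.down (-k).toNat 0 (S.g 0 j) = x}) := by
      ext z
      simp only [Set.mem_setOf_eq, Set.mem_iUnion, Set.mem_inter_iff, sel, if_neg hk]
      constructor
      · intro h; exact ⟨_, rfl, h⟩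
      · rintro ⟨j, hj, h⟩; rw [hj]; exact h
    rw [this]
    exact MeasurableSet.iUnion fun j => (S.meas_upIdx hr0 hr1 _ j).inter meas_const

lemma minidx (S : Sys X r) {k : ℤ} {x : X} (hx : x ∈ S.M k) :
    ∃ i : ℕ, (∀ j < i, S.g k j ≠ S.g k i) ∧ S.g k i = x := by
  have h : ∃ j, S.g k j = x := S.exg hx
  refine ⟨Nat.find h, ?_, Nat.find_spec h⟩
  intro j hj heq
  exact Nat.find_min h hj (heq.trans (Nat.find_spec h))

end Sys
end GDC

open GDC in
/-- Generalised dyadic cubes: in a metric space with the finite doubling property, for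
`0 < r < 1/3` there are index sets `N k ⊆ ℕ`, Borel sets `Q k i` and centres `xc k i`
satisfying (i) each level covers `X`; (ii) nestedness; (iii) inner open ball of radius
`c r^k` and outer closed ball of radius `C r^k` with `c = 1/2 - r/(1-r)`, `C = 1/(1-r)`;
(iv) a fixed point `x₀` with `U(x₀, c r^k)` contained in some level-`k` cube for all `k`;
(v) centres at level `k` are among the centres at level `k+1`. -/
theorem exists_generalised_dyadic_cubes {X : Type*} [MetricSpace X] [MeasurableSpace X]
    [BorelSpace X] [Nonempty X]
    (hFD : ∀ (x : X) (ρ : ℝ), ∃ s : Finset X,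
      Metric.closedBall x (2 * ρ) ⊆ ⋃ y ∈ s, Metric.closedBall y ρ)
    (r : ℝ) (hr0 : 0 < r) (hr : r < 1 / 3) :
    ∃ (N : ℤ → Set ℕ) (Q : ℤ → ℕ → Set X) (xc : ℤ → ℕ → X) (x₀ : X),
      (∀ (k : ℤ), ∀ i ∈ N k, MeasurableSet (Q k i)) ∧
      (∀ k : ℤ, ⋃ i ∈ N k, Q k i = Set.univ) ∧
      (∀ (k m : ℤ), m ≤ k → ∀ i ∈ N k, ∀ j ∈ N m,
        Q k i ∩ Q m j = ∅ ∨ Q k i ⊆ Q m j) ∧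
      (∀ (k : ℤ), ∀ i ∈ N k,
        Metric.ball (xc k i) ((1 / 2 - r / (1 - r)) * r ^ k) ⊆ Q k i ∧
        Q k i ⊆ Metric.closedBall (xc k i) ((1 / (1 - r)) * r ^ k)) ∧
      (∀ k : ℤ, ∃ i ∈ N k, Metric.ball x₀ ((1 / 2 - r / (1 - r)) * r ^ k) ⊆ Q k i) ∧
      (∀ (k : ℤ), ∀ i ∈ N k, ∃ j ∈ N (k + 1), xc (k + 1) j = xc k i) := by
  classical
  have hr1 : r < 1 := lt_trans hr (by norm_num)
  have h1r : (0:ℝ) < 1 - r := by linarith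
  obtain ⟨S⟩ := GDC.exists_sys hFD hr0 hr1
  have hgm : ∀ (k : ℤ) (i : ℕ), S.g k i ∈ S.M k := by
    intro k i; rw [← S.hg k]; exact ⟨i, rfl⟩
  refine ⟨fun k => {i : ℕ | ∀ j < i, S.g k j ≠ S.g k i},
    fun k i => {z | S.sel hr0 hr1 k z = S.g k i},
    fun k i => S.g k i, S.x0, ?_, ?_, ?_, ?_, ?_, ?_⟩
  · intro k i _
    exact S.meas_sel hr0 hr1 k (S.g k i)
  · -- (i) cover
    intro k
    ext z
    simp only [Set.mem_univ, iff_true]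
    obtain ⟨i, hi1, hi2⟩ := S.minidx (S.sel_cc hr0 hr1 k z).1
    exact Set.mem_iUnion₂.2 ⟨i, hi1, hi2.symm⟩
  · -- (ii) nesting
    intro k m hmk i _ j _
    rcases Set.eq_empty_or_nonempty
      ({z | S.sel hr0 hr1 k z = S.g k i} ∩ {z | S.sel hr0 hr1 m z = S.g m j}) with
      he | ⟨z, hz1, hz2⟩
    · exact Or.inl he
    · refine Or.inr fun z' hz' => ?_
      have hco : ∀ w : X, S.down (k - m).toNat k (S.sel hr0 hr1 k w) = S.sel hr0 hr1 m w := by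
        intro w
        have := S.sel_coh hr0 hr1 (k - m).toNat k w
        rwa [show k - (((k - m).toNat : ℕ) : ℤ) = m by omega] at this
      have hz1' : S.sel hr0 hr1 k z = S.g k i := hz1
      have hz2' : S.sel hr0 hr1 m z = S.g m j := hz2
      have h1 : S.down (k - m).toNat k (S.g k i) = S.g m j := by
        rw [← hz1', hco z, hz2']
      have hz'' : S.sel hr0 hr1 k z' = S.g k i := hz'
      show S.sel hr0 hr1 m z' = S.g m j
      rw [← hco z', hz'', h1]
  · -- (iii) inner and outer balls
    intro k i _
    constructor
    · intro z hz
      rw [Metric.mem_ball] at hz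
      show S.sel hr0 hr1 k z = S.g k i
      by_contra hne
      have hcc := S.sel_cc hr0 hr1 k z
      exact S.notin_closure_of_ball hr0 hr1 (hgm k i) hcc.1 hne hz hcc.2
    · intro z hz
      have hcc := S.sel_cc hr0 hr1 k z
      have hz' : S.sel hr0 hr1 k z = S.g k i := hz
      have hsub : S.D k (S.g k i) ⊆ Metric.closedBall (S.g k i) (r ^ k / (1 - r)) :=
        fun u hu => Metric.mem_closedBall.2 (S.D_dist hr0 hr1 hu).le
      have hcl := closure_minimal hsub Metric.isClosed_closedBall
      have hz2 : z ∈ closure (S.D k (S.g k i)) := by rw [← hz']; exact hcc.2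
      have := hcl hz2
      rwa [show r ^ k / (1 - r) = (1 / (1 - r)) * r ^ k by ring] at this
  · -- (iv) the point x₀
    intro k
    obtain ⟨i, hi1, hi2⟩ := S.minidx (S.x0mem k)
    refine ⟨i, hi1, fun z hz => ?_⟩
    rw [Metric.mem_ball] at hz
    show S.sel hr0 hr1 k z = S.g k i
    by_contra hne
    have hcc := S.sel_cc hr0 hr1 k z
    refine S.notin_closure_of_ball hr0 hr1 (hgm k i) hcc.1 hne ?_ hcc.2
    rw [hi2]
    exact hz
  · -- (v) centres are nested
    intro k i _
    have hx : S.g k i ∈ S.M (k + 1) := S.mono (by omega) (hgm k i)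
    obtain ⟨j, hj1, hj2⟩ := S.minidx hx
    exact ⟨j, hj1, hj2⟩
end

section
/- Suppose 0 < r < 1/3 and for each k ∈ ℤ the set {x_{k,i} : i ∈ N_k} is r^k-separated, with each point at level k+1 assigned a nearest-point parent at level k (so the parent is within distance r^k). If n > k and x_{n,j} is NOT a descendant of x_{k,i}, then d(x_{k,i}, x_{n,j}) ≥ (1/2 − r/(1−r)) r^k. -/
open Metric Set

/-- If the level-`k` points form maximal `r^k`-separated sets and parents are chosen as
nearest points at the previous level (hence at distance at most `r^k`), then any point
`xc n j` at a deeper level `n > k` that is NOT a descendant of `xc k i` satisfies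
`dist (xc k i) (xc n j) ≥ (1/2 - r/(1-r)) r^k`. -/
theorem non_descendants_far {X : Type*} [MetricSpace X]
    (r : ℝ) (hr0 : 0 < r) (hr : r < 1 / 3)
    (N : ℤ → Set ℕ) (xc : ℤ → ℕ → X) (parent : ℤ → ℕ → ℕ)
    (hsep : ∀ (k : ℤ), ∀ i ∈ N k, ∀ j ∈ N k, i ≠ j → r ^ k ≤ dist (xc k i) (xc k j))
    (hmax : ∀ (k : ℤ) (y : X), ∃ i ∈ N k, dist y (xc k i) ≤ r ^ k)
    (hnear : ∀ (k : ℤ), ∀ i ∈ N (k + 1), parent (k + 1) i ∈ N k ∧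
      ∀ j ∈ N k, dist (xc (k + 1) i) (xc k (parent (k + 1) i)) ≤ dist (xc (k + 1) i) (xc k j))
    (hpar : ∀ (k : ℤ), ∀ i ∈ N (k + 1),
      dist (xc (k + 1) i) (xc k (parent (k + 1) i)) ≤ r ^ k) :
    ∀ (k n : ℤ), k < n → ∀ i ∈ N k, ∀ j ∈ N n,
      (¬ ∃ f : ℤ → ℕ, f k = i ∧ f n = j ∧
        ∀ m : ℤ, k ≤ m → m < n → f (m + 1) ∈ N (m + 1) ∧ parent (m + 1) (f (m + 1)) = f m) →
      (1 / 2 - r / (1 - r)) * r ^ k ≤ dist (xc k i) (xc n j) := by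
  intro k n hkn i hi j hj hnd
  have hr1 : r < 1 := by linarith
  have h1r : (0:ℝ) < 1 - r := by linarith
  have hne : r ≠ 0 := ne_of_gt hr0
  have hrk : (0:ℝ) < r ^ k := zpow_pos hr0 k
  -- ancestor chain lemma
  have key : ∀ n, k + 1 ≤ n → ∀ j ∈ N n, ∃ c ∈ N (k+1),
      dist (xc (k+1) c) (xc n j) ≤ (r ^ (k+1) - r ^ n) / (1 - r) ∧
      ∃ f : ℤ → ℕ, f (k+1) = c ∧ f n = j ∧
        ∀ m : ℤ, k+1 ≤ m → m < n → f (m+1) ∈ N (m+1) ∧ parent (m+1) (f (m+1)) = f m := by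
    refine fun n hn => Int.le_induction (motive := fun n _ => ∀ j ∈ N n, ∃ c ∈ N (k+1),
      dist (xc (k+1) c) (xc n j) ≤ (r ^ (k+1) - r ^ n) / (1 - r) ∧
      ∃ f : ℤ → ℕ, f (k+1) = c ∧ f n = j ∧
        ∀ m : ℤ, k+1 ≤ m → m < n → f (m+1) ∈ N (m+1) ∧ parent (m+1) (f (m+1)) = f m)
      ?_ ?_ n hn
    · exact fun j hj => ⟨j, hj, by simp, fun _ => j, rfl, rfl,
        fun m h1 h2 => absurd (lt_of_le_of_lt h1 h2) (lt_irrefl _)⟩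
    · intro n hn ih j hj
      obtain ⟨hpN, hnst⟩ := hnear n j hj
      obtain ⟨c, hc, hd, f, hf1, hf2, hf3⟩ := ih (parent (n+1) j) hpN
      refine ⟨c, hc, ?_, fun m => if m = n+1 then j else f m, ?_, ?_, ?_⟩
      · have htri := dist_triangle (xc (k+1) c) (xc n (parent (n+1) j)) (xc (n+1) j)
        have hstep : dist (xc n (parent (n+1) j)) (xc (n+1) j) ≤ r ^ n := by
          rw [dist_comm]; exact hpar n j hj
        have hrn : r ^ (n+1) = r ^ n * r := zpow_add_one₀ hne n
        have heq : (r ^ (k+1) - r ^ n) / (1 - r) + r ^ n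
            = (r ^ (k+1) - r ^ (n+1)) / (1 - r) := by
          rw [hrn]; field_simp; ring
        linarith
      · show (if (k+1:ℤ) = n+1 then j else f (k+1)) = c
        rw [if_neg (by omega : (k+1:ℤ) ≠ n+1)]; exact hf1
      · show (if (n+1:ℤ) = n+1 then j else f (n+1)) = j
        rw [if_pos rfl]
      · intro m h1 h2
        show (if (m+1:ℤ) = n+1 then j else f (m+1)) ∈ N (m+1) ∧
          parent (m+1) (if (m+1:ℤ) = n+1 then j else f (m+1)) = if (m:ℤ) = n+1 then j else f m
        by_cases hm : m = n
        · rw [hm, if_pos rfl, if_neg (by omega : (n:ℤ) ≠ n+1)]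
          exact ⟨hj, hf2.symm⟩
        · rw [if_neg (by omega : (m+1:ℤ) ≠ n+1), if_neg (by omega : (m:ℤ) ≠ n+1)]
          exact hf3 m h1 (by omega)
  obtain ⟨c, hc, hdist, f, hf1, hf2, hf3⟩ := key n hkn j hj
  obtain ⟨hp0N, hp0near⟩ := hnear k c hc
  by_cases hpi : parent (k+1) c = i
  · exfalso
    apply hnd
    refine ⟨fun m => if m = k then i else f m, if_pos rfl, ?_, ?_⟩
    · show (if n = k then i else f n) = j
      rw [if_neg (by omega : n ≠ k)]; exact hf2
    · intro m h1 h2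
      show (if (m+1:ℤ) = k then i else f (m+1)) ∈ N (m+1) ∧
        parent (m+1) (if (m+1:ℤ) = k then i else f (m+1)) = if (m:ℤ) = k then i else f m
      by_cases hm : m = k
      · rw [hm, if_pos rfl, if_neg (by omega : (k+1:ℤ) ≠ k), hf1]
        exact ⟨hc, hpi⟩
      · rw [if_neg (by omega : (m+1:ℤ) ≠ k), if_neg hm]
        exact hf3 m (by omega) h2
  · -- half-separation
    have hsepk : r ^ k ≤ dist (xc k i) (xc k (parent (k+1) c)) :=
      hsep k i hi _ hp0N (fun h => hpi h.symm)
    have hnst : dist (xc (k+1) c) (xc k (parent (k+1) c)) ≤ dist (xc (k+1) c) (xc k i) :=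
      hp0near i hi
    have htri : dist (xc k i) (xc k (parent (k+1) c)) ≤
        dist (xc k i) (xc (k+1) c) + dist (xc (k+1) c) (xc k (parent (k+1) c)) :=
      dist_triangle _ _ _
    have hhalf : r ^ k / 2 ≤ dist (xc k i) (xc (k+1) c) := by
      have : dist (xc (k+1) c) (xc k i) = dist (xc k i) (xc (k+1) c) := dist_comm _ _
      linarith
    have htri2 : dist (xc k i) (xc (k+1) c) ≤
        dist (xc k i) (xc n j) + dist (xc (k+1) c) (xc n j) := by
      have := dist_triangle (xc k i) (xc n j) (xc (k+1) c)
      rw [dist_comm (xc n j) (xc (k+1) c)] at this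
      linarith
    have hrn : (0:ℝ) < r ^ n := zpow_pos hr0 n
    have hrk1 : r ^ (k+1) = r ^ k * r := zpow_add_one₀ hne k
    rw [hrk1] at hdist
    have hub : dist (xc (k+1) c) (xc n j) ≤ r ^ k * r / (1 - r) := by
      have h1 : (r ^ k * r - r ^ n) / (1 - r) ≤ r ^ k * r / (1 - r) := by
        gcongr <;> linarith
      linarith
    have hfin : (1/2 - r/(1-r)) * r ^ k = r ^ k / 2 - r ^ k * r / (1-r) := by
      field_simp
    linarith
end

section
/- Let X be a metric space with the finite doubling property, 0 < r ≤ 1/7, and let {Q_{k,i}} be generalised dyadic cubes with centers x_{k,i} satisfying U(x_{k,i}, c r^k) ⊂ Q_{k,i} ⊂ B(x_{k,i}, C r^k) with c = 1/2 − r/(1−r), C = 1/(1−r), and center-preservation: for each (k,i) there is l ∈ N_{k+1} with x_{k+1,l} = x_{k,i} and Q_{k+1,l} ⊂ Q_{k,i}. Then the closure of Q_{k+1,l} is contained in the interior of Q_{k,i}; in fact, closure(Q_{k+1,l}) ⊂ B(x_{k,i}, C r^{k+1}) ⊂ U(x_{k,i}, c r^k) ⊂ Q_{k,i}. -/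
open Metric Set

/-- For generalised dyadic cubes with `0 < r ≤ 1/7`, the closure of a centre-preserving
child `Q (k+1) l` (with `xc (k+1) l = xc k i`) is contained in
`B(xc k i, C r^{k+1}) ⊆ U(xc k i, c r^k) ⊆ Q k i`; in particular it is contained in the
interior of the parent cube `Q k i`. -/
theorem central_child_closure_subset_interior {X : Type*} [MetricSpace X]
    (r c C : ℝ) (hr0 : 0 < r) (hr : r ≤ 1 / 7)
    (hc : c = 1 / 2 - r / (1 - r)) (hC : C = 1 / (1 - r))
    (N : ℤ → Set ℕ) (Q : ℤ → ℕ → Set X) (xc : ℤ → ℕ → X)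
    (hball : ∀ (k : ℤ), ∀ i ∈ N k,
      Metric.ball (xc k i) (c * r ^ k) ⊆ Q k i ∧
      Q k i ⊆ Metric.closedBall (xc k i) (C * r ^ k))
    (k : ℤ) (i l : ℕ) (hi : i ∈ N k) (hl : l ∈ N (k + 1))
    (hx : xc (k + 1) l = xc k i) (hQ : Q (k + 1) l ⊆ Q k i) :
    closure (Q (k + 1) l) ⊆ Metric.closedBall (xc k i) (C * r ^ (k + 1)) ∧
    Metric.closedBall (xc k i) (C * r ^ (k + 1)) ⊆ Metric.ball (xc k i) (c * r ^ k) ∧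
    Metric.ball (xc k i) (c * r ^ k) ⊆ Q k i ∧
    closure (Q (k + 1) l) ⊆ interior (Q k i) := by
  have hrk : (0:ℝ) < r ^ k := zpow_pos hr0 k
  have hlt : C * r ^ (k + 1) < c * r ^ k := by
    have h1r : (0:ℝ) < 1 - r := by linarith
    have : r ^ (k + 1) = r ^ k * r := by
      rw [zpow_add_one₀ (ne_of_gt hr0)]
    rw [this, hc, hC]
    have key : (1 / (1 - r)) * r < 1 / 2 - r / (1 - r) := by
      rw [div_mul_eq_mul_div, one_mul, lt_sub_iff_add_lt, ← add_div,
        div_lt_iff₀ h1r]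
      nlinarith
    calc 1 / (1 - r) * (r ^ k * r) = (1 / (1 - r) * r) * r ^ k := by ring
      _ < (1 / 2 - r / (1 - r)) * r ^ k := by
          exact mul_lt_mul_of_pos_right key hrk
  obtain ⟨hb1, hb2⟩ := hball k i hi
  obtain ⟨_, hc2⟩ := hball (k + 1) l hl
  rw [hx] at hc2
  have h1 : closure (Q (k + 1) l) ⊆ Metric.closedBall (xc k i) (C * r ^ (k + 1)) :=
    closure_minimal hc2 Metric.isClosed_closedBall
  have h2 : Metric.closedBall (xc k i) (C * r ^ (k + 1)) ⊆
      Metric.ball (xc k i) (c * r ^ k) :=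
    Metric.closedBall_subset_ball hlt
  refine ⟨h1, h2, hb1, ?_⟩
  exact fun x hxm => interior_maximal hb1 Metric.isOpen_ball (h2 (h1 hxm))
end

section
/- Let X be a complete doubling metric space, 0 < r ≤ 1/7, {Q_{k,i}} generalised dyadic cubes, Σ the code space with projection π: Σ → X, and ν the doubling measure on Σ from the construction with parameter p. Then the pushforward μ = π_*ν satisfies μ(∂Q_{k,i}) = 0 for all k and i, and consequently μ(Q_{k,i}) = ν([k,i]). -/
open Metric Set MeasureTheory ENNReal

/-- Let `X` be a complete doubling metric space with generalised dyadic cubes `Q k i`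
(`0 < r ≤ 1/7`), let `Y` be the code space of nested chains (an ultrametric space whose
cylinders `cyl k i` are clopen balls forming nested partitions matching the cubes), let
`π : Y → X` be the projection with `π '' cyl k i = closure (Q k i)`, and let `ν` be a
doubling measure on `Y` whose cylinder masses follow the construction. Then the
pushforward `μ = π_* ν` gives zero mass to every cube boundary, and consequently
`μ (Q k i) = ν (cyl k i)`. -/
theorem pushforward_boundary_null {X Y : Type*} [MetricSpace X] [CompleteSpace X]
    [MeasurableSpace X] [BorelSpace X] [MetricSpace Y] [MeasurableSpace Y] [BorelSpace Y]
    (r c C : ℝ) (hr0 : 0 < r) (hr : r ≤ 1 / 7)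
    (hc : c = 1 / 2 - r / (1 - r)) (hC : C = 1 / (1 - r))
    (N : ℤ → Set ℕ) (Q : ℤ → ℕ → Set X) (xc : ℤ → ℕ → X)
    (hQcover : ∀ k : ℤ, ⋃ i ∈ N k, Q k i = Set.univ)
    (hQnest : ∀ (k m : ℤ), m ≤ k → ∀ i ∈ N k, ∀ j ∈ N m,
      Q k i ∩ Q m j = ∅ ∨ Q k i ⊆ Q m j)
    (hQball : ∀ (k : ℤ), ∀ i ∈ N k,
      Metric.ball (xc k i) (c * r ^ k) ⊆ Q k i ∧
      Q k i ⊆ Metric.closedBall (xc k i) (C * r ^ k))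
    (hQctr : ∀ (k : ℤ), ∀ i ∈ N k, ∃ l ∈ N (k + 1),
      xc (k + 1) l = xc k i ∧ Q (k + 1) l ⊆ Q k i)
    (cyl : ℤ → ℕ → Set Y)
    (hcover : ∀ k : ℤ, ⋃ i ∈ N k, cyl k i = Set.univ)
    (hdisj : ∀ (k : ℤ), ∀ i ∈ N k, ∀ j ∈ N k, i ≠ j → cyl k i ∩ cyl k j = ∅)
    (hballs : ∀ (k : ℤ), ∀ i ∈ N k, ∀ σ ∈ cyl k i,
      cyl k i = Metric.closedBall σ ((2 : ℝ) ^ (-(k + 1))))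
    (hmatch : ∀ (k : ℤ), ∀ j ∈ N (k + 1), ∀ i ∈ N k,
      (cyl (k + 1) j ⊆ cyl k i ↔ Q (k + 1) j ⊆ Q k i))
    (π : Y → X) (hπ : Continuous π)
    (hproj : ∀ (k : ℤ), ∀ i ∈ N k, π '' cyl k i = closure (Q k i))
    (hpre : ∀ (k : ℤ), ∀ i ∈ N k, π ⁻¹' interior (Q k i) ⊆ cyl k i)
    (ν : Measure Y) (D : ℝ≥0∞) (hD : D < ⊤)
    (hνdoub : ∀ (y : Y) (ρ : ℝ), 0 < ρ →
      0 < ν (Metric.closedBall y ρ) ∧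
      ν (Metric.closedBall y (2 * ρ)) ≤ D * ν (Metric.closedBall y ρ) ∧
      ν (Metric.closedBall y ρ) < ⊤) :
    ∀ (k : ℤ), ∀ i ∈ N k,
      (Measure.map π ν) (frontier (Q k i)) = 0 ∧
      (Measure.map π ν) (Q k i) = ν (cyl k i) := by
  -- basic real arithmetic
  have hr1 : r < 1 := by linarith
  have h1r : (0:ℝ) < 1 - r := by linarith
  have hc0 : 0 < c := by
    have h2 : r / (1 - r) < 1/2 := by rw [div_lt_iff₀ h1r]; nlinarith
    rw [hc]; linarith
  have hCrc : C * r < c := by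
    rw [hC, hc]
    have h2 : r / (1 - r) ≤ 1/6 := by rw [div_le_iff₀ h1r]; nlinarith
    have h3 : 1 / (1 - r) * r = r / (1 - r) := by ring
    rw [h3]; linarith
  -- cubes are nonempty
  have hQne : ∀ m : ℤ, ∀ j ∈ N m, (Q m j).Nonempty := by
    intro m j hj
    exact ⟨xc m j, (hQball m j hj).1 (mem_ball_self (by positivity))⟩
  -- cylinders are nonempty
  have hcylne : ∀ m : ℤ, ∀ j ∈ N m, (cyl m j).Nonempty := by
    intro m j hj
    have h : (π '' cyl m j).Nonempty := by
      rw [hproj m j hj]; exact (hQne m j hj).closure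
    exact h.of_image
  -- cylinders are measurable with finite measure
  have hcylmeas : ∀ m : ℤ, ∀ j ∈ N m, MeasurableSet (cyl m j) := by
    intro m j hj
    obtain ⟨σ, hσ⟩ := hcylne m j hj
    rw [hballs m j hj σ hσ]
    exact measurableSet_closedBall
  have hcylfin : ∀ m : ℤ, ∀ j ∈ N m, ν (cyl m j) < ⊤ := by
    intro m j hj
    obtain ⟨σ, hσ⟩ := hcylne m j hj
    rw [hballs m j hj σ hσ]
    exact (hνdoub σ _ (by positivity)).2.2
  intro k i hi
  -- D is nonzero, hence 1 - D⁻¹ < 1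
  have hD0 : D ≠ 0 := by
    intro h0
    obtain ⟨σ₀, -⟩ := hcylne k i hi
    have h1 := (hνdoub σ₀ 1 one_pos).1
    have h2 := (hνdoub σ₀ 1 one_pos).2.1
    have h3 : ν (Metric.closedBall σ₀ 1) ≤ ν (Metric.closedBall σ₀ (2*1)) :=
      measure_mono (closedBall_subset_closedBall (by norm_num))
    rw [h0, zero_mul] at h2
    exact absurd (le_antisymm (h3.trans h2) zero_le) h1.ne'
  have hb : (1 - D⁻¹ : ℝ≥0∞) < 1 :=
    ENNReal.sub_lt_self one_ne_top one_ne_zero (ENNReal.inv_ne_zero.mpr hD.ne)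
  set E : Set Y := π ⁻¹' frontier (Q k i) with hE
  have hEmeas : MeasurableSet E :=
    (isClosed_frontier.preimage hπ).measurableSet
  -- every cylinder at level m ≥ k contains a hole of proportional measure avoiding E
  have hole : ∀ m : ℤ, k ≤ m → ∀ j ∈ N m, ∃ l ∈ N (m+1),
      cyl (m+1) l ⊆ cyl m j ∧ cyl (m+1) l ∩ E = ∅ ∧
      ν (cyl m j) ≤ D * ν (cyl (m+1) l) := by
    intro m hkm j hj
    obtain ⟨l, hl, hxl, hQl⟩ := hQctr m j hj
    have hcylsub : cyl (m+1) l ⊆ cyl m j := (hmatch m l hl j hj).mpr hQl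
    refine ⟨l, hl, hcylsub, ?_, ?_⟩
    · -- the hole avoids E
      have hsubball : closure (Q (m+1) l) ⊆ ball (xc m j) (c * r ^ m) := by
        have h1 : Q (m+1) l ⊆ closedBall (xc m j) (C * r ^ (m+1)) := by
          rw [← hxl]; exact (hQball (m+1) l hl).2
        have h2 : closedBall (xc m j) (C * r ^ (m+1)) ⊆ ball (xc m j) (c * r ^ m) := by
          apply closedBall_subset_ball
          have : C * r ^ (m+1) = (C * r) * r ^ m := by
            rw [zpow_add_one₀ hr0.ne']; ring
          rw [this]
          exact mul_lt_mul_of_pos_right hCrc (zpow_pos hr0 m)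
        exact (closure_minimal h1 isClosed_closedBall).trans h2
      have hballQ : ball (xc m j) (c * r ^ m) ⊆ Q m j := (hQball m j hj).1
      rw [eq_empty_iff_forall_notMem]
      rintro σ ⟨hσl, hσE⟩
      have hπσ : π σ ∈ closure (Q (m+1) l) := by
        rw [← hproj (m+1) l hl]; exact mem_image_of_mem π hσl
      have hπball : π σ ∈ ball (xc m j) (c * r ^ m) := hsubball hπσ
      have hσfr : π σ ∈ frontier (Q k i) := hσE
      rcases hQnest m k hkm j hj i hi with hdis | hsub
      · -- the ball misses the closure of Q k i
        have h1 : Q k i ⊆ (ball (xc m j) (c * r ^ m))ᶜ := by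
          intro x hx hxb
          exact absurd (mem_inter (hballQ hxb) hx) (by rw [hdis]; exact notMem_empty x)
        have h2 : closure (Q k i) ⊆ (ball (xc m j) (c * r ^ m))ᶜ :=
          closure_minimal h1 isOpen_ball.isClosed_compl
        exact h2 (frontier_subset_closure hσfr) hπball
      · -- the ball lies in the interior of Q k i
        have h1 : ball (xc m j) (c * r ^ m) ⊆ interior (Q k i) :=
          interior_maximal (hballQ.trans hsub) isOpen_ball
        exact hσfr.2 (h1 hπball)
    · -- measure of the hole
      obtain ⟨τ, hτ⟩ := hcylne (m+1) l hl
      have hτ' : τ ∈ cyl m j := hcylsub hτ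
      have e1 : cyl m j = closedBall τ ((2:ℝ) ^ (-(m+1))) := hballs m j hj τ hτ'
      have e2 : cyl (m+1) l = closedBall τ ((2:ℝ) ^ (-(m+1+1))) := hballs (m+1) l hl τ hτ
      have hrad : (2:ℝ) * (2:ℝ) ^ (-(m+1+1)) = (2:ℝ) ^ (-(m+1)) := by
        rw [show (-(m+1) : ℤ) = 1 + -(m+1+1) by ring, zpow_add₀ (two_ne_zero), zpow_one]
      have hd := (hνdoub τ ((2:ℝ) ^ (-(m+1+1))) (by positivity)).2.1
      rw [hrad] at hd
      rw [e1, e2]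
      exact hd
  -- key iteration: mass of E inside a cylinder shrinks geometrically
  have main : ∀ t : ℕ, ∀ m : ℤ, k ≤ m → ∀ j ∈ N m,
      ν (E ∩ cyl m j) ≤ (1 - D⁻¹)^t * ν (cyl m j) := by
    intro t
    induction t with
    | zero =>
      intro m hm j hj
      simpa using measure_mono (inter_subset_right : E ∩ cyl m j ⊆ cyl m j)
    | succ t ih =>
      intro m hm j hj
      obtain ⟨l₀, hl₀, hsub₀, hdis₀, hmeas₀⟩ := hole m hm j hj
      set S : Set ℕ := {l | l ∈ N (m+1) ∧ l ≠ l₀ ∧ cyl (m+1) l ⊆ cyl m j} with hS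
      have hScnt : S.Countable := S.to_countable
      have hcovE : E ∩ cyl m j ⊆ ⋃ l ∈ S, (E ∩ cyl (m+1) l) := by
        rintro σ ⟨hσE, hσc⟩
        have hσu : σ ∈ ⋃ l ∈ N (m+1), cyl (m+1) l := by
          rw [hcover (m+1)]; exact mem_univ σ
        obtain ⟨l, hl, hσl⟩ := mem_iUnion₂.mp hσu
        have hsubl : cyl (m+1) l ⊆ cyl m j := by
          rw [hballs m j hj σ hσc, hballs (m+1) l hl σ hσl]
          exact closedBall_subset_closedBall
            (zpow_le_zpow_right₀ one_le_two (by linarith))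
        have hne : l ≠ l₀ := by
          rintro rfl
          exact absurd (mem_inter hσl hσE) (by rw [hdis₀]; exact notMem_empty σ)
        exact mem_biUnion ⟨hl, hne, hsubl⟩ ⟨hσE, hσl⟩
      have hdisjS : S.PairwiseDisjoint (fun l => cyl (m+1) l) := by
        intro a ha b hb hab
        exact disjoint_iff_inter_eq_empty.mpr (hdisj (m+1) a ha.1 b hb.1 hab)
      have hsumU : ∑' l : S, ν (cyl (m+1) l) = ν (⋃ l ∈ S, cyl (m+1) l) :=
        (measure_biUnion hScnt hdisjS (fun l hl => hcylmeas (m+1) l hl.1)).symm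
      have hUsub : (⋃ l ∈ S, cyl (m+1) l) ⊆ cyl m j \ cyl (m+1) l₀ := by
        rintro σ hσ
        obtain ⟨l, hlS, hσl⟩ := mem_iUnion₂.mp hσ
        refine ⟨hlS.2.2 hσl, fun hσ0 => ?_⟩
        exact absurd (mem_inter hσl hσ0)
          (by rw [hdisj (m+1) l hlS.1 l₀ hl₀ hlS.2.1]; exact notMem_empty σ)
      have hdiff : ν (cyl m j \ cyl (m+1) l₀) = ν (cyl m j) - ν (cyl (m+1) l₀) :=
        measure_diff hsub₀ (hcylmeas (m+1) l₀ hl₀).nullMeasurableSet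
          (hcylfin (m+1) l₀ hl₀).ne
      have hfrac : D⁻¹ * ν (cyl m j) ≤ ν (cyl (m+1) l₀) := by
        calc D⁻¹ * ν (cyl m j) ≤ D⁻¹ * (D * ν (cyl (m+1) l₀)) :=
              mul_le_mul_right hmeas₀ _
          _ = (D⁻¹ * D) * ν (cyl (m+1) l₀) := (mul_assoc _ _ _).symm
          _ = ν (cyl (m+1) l₀) := by rw [ENNReal.inv_mul_cancel hD0 hD.ne, one_mul]
      have hkey : ν (cyl m j) - ν (cyl (m+1) l₀) ≤ (1 - D⁻¹) * ν (cyl m j) := by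
        have h1 : ν (cyl m j) - ν (cyl (m+1) l₀) ≤ ν (cyl m j) - D⁻¹ * ν (cyl m j) :=
          tsub_le_tsub_left hfrac _
        have h2 : (1 - D⁻¹) * ν (cyl m j) = 1 * ν (cyl m j) - D⁻¹ * ν (cyl m j) :=
          ENNReal.sub_mul (fun _ _ => (hcylfin m j hj).ne)
        rw [h2, one_mul]
        exact h1
      calc ν (E ∩ cyl m j) ≤ ν (⋃ l ∈ S, (E ∩ cyl (m+1) l)) := measure_mono hcovE
        _ ≤ ∑' l : S, ν (E ∩ cyl (m+1) l) := measure_biUnion_le ν hScnt _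
        _ ≤ ∑' l : S, (1 - D⁻¹)^t * ν (cyl (m+1) l) :=
            ENNReal.tsum_le_tsum (fun ⟨l, hlS⟩ => ih (m+1) (by linarith) l hlS.1)
        _ = (1 - D⁻¹)^t * ∑' l : S, ν (cyl (m+1) l) := ENNReal.tsum_mul_left
        _ ≤ (1 - D⁻¹)^t * ((1 - D⁻¹) * ν (cyl m j)) := by
            refine mul_le_mul_right ?_ _
            rw [hsumU]
            exact (measure_mono hUsub).trans (hdiff ▸ hkey)
        _ = (1 - D⁻¹)^(t+1) * ν (cyl m j) := by ring
  -- the mass of E inside any cylinder at level ≥ k is zero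
  have hEc0 : ∀ m : ℤ, k ≤ m → ∀ j ∈ N m, ν (E ∩ cyl m j) = 0 := by
    intro m hm j hj
    have hfin := hcylfin m j hj
    have htend : Filter.Tendsto (fun t : ℕ => (1 - D⁻¹)^t * ν (cyl m j))
        Filter.atTop (nhds 0) := by
      have h0 := ENNReal.tendsto_pow_atTop_nhds_zero_of_lt_one hb
      have := ENNReal.Tendsto.mul_const h0 (Or.inr hfin.ne)
      simpa using this
    have hle : ν (E ∩ cyl m j) ≤ 0 :=
      ge_of_tendsto' htend (fun t => main t m hm j hj)
    exact le_antisymm hle zero_le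
  -- hence E is null
  have hEnull : ν E = 0 := by
    have hcov : E ⊆ ⋃ j ∈ N k, (E ∩ cyl k j) := by
      intro σ hσ
      have hσu : σ ∈ ⋃ j ∈ N k, cyl k j := by rw [hcover k]; exact mem_univ σ
      obtain ⟨j, hj, hσj⟩ := mem_iUnion₂.mp hσu
      exact mem_biUnion hj ⟨hσ, hσj⟩
    have h1 : ν E ≤ ∑' j : N k, ν (E ∩ cyl k j) :=
      (measure_mono hcov).trans (measure_biUnion_le ν (N k).to_countable _)
    have h2 : ∑' j : N k, ν (E ∩ cyl k j) = 0 := by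
      rw [ENNReal.tsum_eq_zero]
      exact fun ⟨j, hj⟩ => hEc0 k le_rfl j hj
    exact le_antisymm (h1.trans h2.le) zero_le
  -- conclude
  have hmapfr : Measure.map π ν (frontier (Q k i)) = 0 := by
    rw [Measure.map_apply hπ.measurable isClosed_frontier.measurableSet]
    exact hEnull
  refine ⟨hmapfr, le_antisymm ?_ ?_⟩
  · -- map π ν (Q k i) ≤ ν (cyl k i)
    calc Measure.map π ν (Q k i) ≤ Measure.map π ν (closure (Q k i)) :=
          measure_mono subset_closure
      _ = ν (π ⁻¹' closure (Q k i)) :=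
          Measure.map_apply hπ.measurable isClosed_closure.measurableSet
      _ ≤ ν (π ⁻¹' interior (Q k i) ∪ E) := by
          apply measure_mono
          intro σ hσ
          have : π σ ∈ interior (Q k i) ∪ frontier (Q k i) := by
            rw [← closure_eq_interior_union_frontier]; exact hσ
          exact this.imp (fun h => h) (fun h => h)
      _ ≤ ν (π ⁻¹' interior (Q k i)) + ν E := measure_union_le _ _
      _ = ν (π ⁻¹' interior (Q k i)) := by rw [hEnull, add_zero]
      _ ≤ ν (cyl k i) := measure_mono (hpre k i hi)
  · -- ν (cyl k i) ≤ map π ν (Q k i)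
    calc ν (cyl k i) ≤ ν (π ⁻¹' closure (Q k i)) := by
          apply measure_mono
          rw [← hproj k i hi]
          exact subset_preimage_image π _
      _ ≤ ν (π ⁻¹' (Q k i) ∪ E) := by
          apply measure_mono
          intro σ hσ
          have h1 : π σ ∈ closure (Q k i) := hσ
          rw [closure_eq_self_union_frontier] at h1
          exact h1.imp (fun h => h) (fun h => h)
      _ ≤ ν (π ⁻¹' (Q k i)) + ν E := measure_union_le _ _
      _ = ν (π ⁻¹' (Q k i)) := by rw [hEnull, add_zero]
      _ ≤ Measure.map π ν (Q k i) :=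
          Measure.le_map_apply hπ.measurable.aemeasurable _
end

section
/- Let X be a doubling metric space with generalised dyadic cubes {Q_{k,i}} at scales r^k (r ≤ 1/7) and let μ be the doubling measure constructed via the cylinder recursion with parameter 0 < p < 1/(M+1). If Q_{k,i} and Q_{k,j} are two cubes at the same level k with d(x_{k,i}, x_{k,j}) < r^{k−3}, then μ(Q_{k,j}) ≤ p^{−4} μ(Q_{k,i}). -/
open Metric Set MeasureTheory ENNReal Classical
noncomputable section

section ChainAux

variable {X : Type*} {N : ℤ → Set ℕ} {Q : ℤ → ℕ → Set X}

/-- Ancestor chain of a cube, built by iterating the parent map. -/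
noncomputable def chainP
    (hparent : ∀ (k : ℤ), ∀ i ∈ N k, ∃ j ∈ N (k - 1), Q k i ⊆ Q (k - 1) j)
    (k : ℤ) (i : ℕ) (hi : i ∈ N k) :
    (t : ℕ) → {a : ℕ // a ∈ N (k - (t : ℤ)) ∧ Q k i ⊆ Q (k - (t : ℤ)) a}
  | 0 => ⟨i, by simpa using hi, by simp⟩
  | (t+1) =>
    ⟨(hparent (k - (t : ℤ)) (chainP hparent k i hi t).1
        (chainP hparent k i hi t).2.1).choose, by
      have h := (hparent (k - (t : ℤ)) (chainP hparent k i hi t).1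
        (chainP hparent k i hi t).2.1).choose_spec
      have e : k - ((t : ℕ) : ℤ) - 1 = k - (((t+1 : ℕ)) : ℤ) := by push_cast; ring
      rw [← e]
      exact ⟨h.1, (chainP hparent k i hi t).2.2.trans h.2⟩⟩

theorem chainP_succ_fst
    (hparent : ∀ (k : ℤ), ∀ i ∈ N k, ∃ j ∈ N (k - 1), Q k i ⊆ Q (k - 1) j)
    (k : ℤ) (i : ℕ) (hi : i ∈ N k) (t : ℕ) :
    (chainP hparent k i hi (t+1)).1
      = (hparent (k - (t : ℤ)) (chainP hparent k i hi t).1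
          (chainP hparent k i hi t).2.1).choose := rfl

theorem chainP_step
    (hparent : ∀ (k : ℤ), ∀ i ∈ N k, ∃ j ∈ N (k - 1), Q k i ⊆ Q (k - 1) j)
    (k : ℤ) (i : ℕ) (hi : i ∈ N k) (t : ℕ) :
    Q (k - (t : ℤ)) (chainP hparent k i hi t).1
      ⊆ Q (k - (((t+1) : ℕ) : ℤ)) (chainP hparent k i hi (t+1)).1 := by
  have h := (hparent (k - (t : ℤ)) (chainP hparent k i hi t).1
    (chainP hparent k i hi t).2.1).choose_spec
  have e : k - ((t : ℕ) : ℤ) - 1 = k - (((t+1 : ℕ)) : ℤ) := by push_cast; ring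
  rw [chainP_succ_fst, ← e]
  exact h.2

theorem chainP_congr
    (hparent : ∀ (k : ℤ), ∀ i ∈ N k, ∃ j ∈ N (k - 1), Q k i ⊆ Q (k - 1) j)
    (k : ℤ) (i j : ℕ) (hi : i ∈ N k) (hj : j ∈ N k) (t : ℕ)
    (h : (chainP hparent k i hi t).1 = (chainP hparent k j hj t).1) :
    (chainP hparent k i hi (t+1)).1 = (chainP hparent k j hj (t+1)).1 := by
  rw [chainP_succ_fst, chainP_succ_fst]
  have key : ∀ (a b : ℕ) (ha : a ∈ N (k - (t:ℤ))) (hb : b ∈ N (k - (t:ℤ))), a = b →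
      (hparent (k - (t:ℤ)) a ha).choose = (hparent (k - (t:ℤ)) b hb).choose := by
    rintro a b ha hb rfl; rfl
  exact key _ _ (chainP hparent k i hi t).2.1 (chainP hparent k j hj t).2.1 h

end ChainAux

/-- real-number geometric estimate -/
theorem geom_est (r c C : ℝ) (hr0 : 0 < r) (hr : r ≤ 1 / 7)
    (hc : c = 1 / 2 - r / (1 - r)) (hC : C = 1 / (1 - r))
    (k n : ℤ) (hn : n ≤ k - 4) :
    C * r ^ (n + 1) + r ^ (k - 3) < c * r ^ n := by
  have hr1 : r < 1 := lt_of_le_of_lt hr (by norm_num)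
  have h1r : (0:ℝ) < 1 - r := by linarith
  have hdiv : r / (1 - r) ≤ 1 / 6 := by rw [div_le_div_iff₀ h1r (by norm_num)]; linarith
  have hCr : C * r = r / (1 - r) := by rw [hC]; ring
  have hcC : (1:ℝ)/6 ≤ c - C * r := by rw [hc, hCr]; linarith
  have hpow : r ^ (k - 4) ≤ r ^ n := zpow_le_zpow_right_of_le_one₀ hr0 hr1.le hn
  have hk4 : (0:ℝ) < r ^ (k - 4) := zpow_pos hr0 _
  have hn0 : (0:ℝ) < r ^ n := zpow_pos hr0 _
  have e34 : r ^ (k - 3) = r ^ (k - 4) * r := by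
    rw [← zpow_add_one₀ hr0.ne']; ring_nf
  have e1 : r ^ (n + 1) = r ^ n * r := zpow_add_one₀ hr0.ne' n
  rw [e34, e1]
  nlinarith [mul_le_mul_of_nonneg_right hpow (le_of_lt hr0)]


/-- For the doubling measure `μ` built on generalised dyadic cubes (`0 < r ≤ 1/7`) via
the cylinder recursion with parameter `0 < p < 1/(M+1)`: if two cubes `Q k i`, `Q k j`
at the same level have nearby centres, `dist (xc k i) (xc k j) < r^{k-3}`, then
`μ (Q k j) ≤ p⁻¹^4 · μ (Q k i)`. -/
theorem nearby_cubes_comparable {X : Type*} [MetricSpace X] [MeasurableSpace X]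
    [BorelSpace X]
    (r c C : ℝ) (hr0 : 0 < r) (hr : r ≤ 1 / 7)
    (hc : c = 1 / 2 - r / (1 - r)) (hC : C = 1 / (1 - r))
    (N : ℤ → Set ℕ) (Q : ℤ → ℕ → Set X) (xc : ℤ → ℕ → X)
    (hcover : ∀ k : ℤ, ⋃ i ∈ N k, Q k i = Set.univ)
    (hnest : ∀ (k m : ℤ), m ≤ k → ∀ i ∈ N k, ∀ j ∈ N m,
      Q k i ∩ Q m j = ∅ ∨ Q k i ⊆ Q m j)
    (hdisj : ∀ (k : ℤ), ∀ i ∈ N k, ∀ j ∈ N k, i ≠ j → Q k i ∩ Q k j = ∅)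
    (hball : ∀ (k : ℤ), ∀ i ∈ N k,
      Metric.ball (xc k i) (c * r ^ k) ⊆ Q k i ∧
      Q k i ⊆ Metric.closedBall (xc k i) (C * r ^ k))
    (hparent : ∀ (k : ℤ), ∀ i ∈ N k, ∃ j ∈ N (k - 1), Q k i ⊆ Q (k - 1) j)
    (hanc : ∀ (k : ℤ), ∀ i ∈ N k, ∀ j ∈ N k, ∃ m : ℤ, m ≤ k ∧
      ∃ l ∈ N m, Q k i ⊆ Q m l ∧ Q k j ⊆ Q m l)
    (M : ℕ) (Mf : ℤ → ℕ → ℕ) (hM : ∀ (k : ℤ) (i : ℕ), Mf k i ≤ M)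
    (p : ℝ≥0∞) (hp0 : 0 < p) (hp1 : p < 1 / ((M : ℝ≥0∞) + 1))
    (μ : Measure X)
    (hrec : ∀ (k : ℤ), ∀ i ∈ N k, ∀ j ∈ N (k + 1), Q (k + 1) j ⊆ Q k i →
      μ (Q (k + 1) j) = if xc (k + 1) j = xc k i then (1 - (Mf k i : ℝ≥0∞) * p) * μ (Q k i)
        else p * μ (Q k i)) :
    ∀ (k : ℤ), ∀ i ∈ N k, ∀ j ∈ N k,
      dist (xc k i) (xc k j) < r ^ (k - 3) →
      μ (Q k j) ≤ p⁻¹ ^ 4 * μ (Q k i) := by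
  intro k i hi j hj hdist
  -- basic real facts
  have hr1 : r < 1 := lt_of_le_of_lt hr (by norm_num)
  have h1r : (0:ℝ) < 1 - r := by linarith
  have hdiv : r / (1 - r) ≤ 1 / 6 := by
    rw [div_le_div_iff₀ h1r (by norm_num)]; linarith
  have hc0 : 0 < c := by rw [hc]; linarith
  have hxc : ∀ (n : ℤ) (a : ℕ), a ∈ N n → xc n a ∈ Q n a := by
    intro n a ha
    exact (hball n a ha).1 (Metric.mem_ball_self (by positivity))
  -- basic ENNReal facts
  have hM1 : ((M:ℝ≥0∞)+1) ≠ 0 := by simp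
  have hM2 : ((M:ℝ≥0∞)+1) ≠ ∞ := by simp
  have hpne : p ≠ 0 := hp0.ne'
  have hplt1 : p < 1 := by
    refine lt_of_lt_of_le hp1 ?_
    rw [one_div]
    exact ENNReal.inv_le_one.2 (le_add_self.trans (le_refl _))
  have hptop : p ≠ ∞ := ne_of_lt (lt_of_lt_of_le hplt1 le_top)
  have hinv1 : (1:ℝ≥0∞) ≤ p⁻¹ := ENNReal.one_le_inv.2 hplt1.le
  have hpowinv : ∀ n : ℕ, (1:ℝ≥0∞) ≤ p⁻¹ ^ n := fun n => one_le_pow_of_one_le' hinv1 n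
  have hMp1 : (M:ℝ≥0∞) * p + p ≤ 1 := by
    have h2 : ((M:ℝ≥0∞)+1) * p < 1 := by
      have h3 := ENNReal.mul_lt_mul_right hM1 hM2 hp1
      rwa [one_div, ENNReal.mul_inv_cancel hM1 hM2] at h3
    calc (M:ℝ≥0∞) * p + p = ((M:ℝ≥0∞)+1) * p := by ring
    _ ≤ 1 := h2.le
  have hfac_ge : ∀ (n : ℤ) (a : ℕ), p ≤ 1 - (Mf n a : ℝ≥0∞) * p := by
    intro n a
    apply (ENNReal.cancel_of_ne (ENNReal.mul_ne_top (ENNReal.natCast_ne_top _) hptop)).le_tsub_of_add_le_right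
    calc p + (Mf n a : ℝ≥0∞) * p ≤ p + (M:ℝ≥0∞) * p :=
          add_le_add_right (mul_le_mul_left (show (Mf n a : ℝ≥0∞) ≤ M by exact_mod_cast hM n a) p) p
    _ = (M:ℝ≥0∞) * p + p := by ring
    _ ≤ 1 := hMp1
  -- the recursion along chains
  have hrec' : ∀ (a : ℕ) (ha : a ∈ N k) (t : ℕ),
      μ (Q (k - (t:ℤ)) (chainP hparent k a ha t).1) =
        if xc (k - (t:ℤ)) (chainP hparent k a ha t).1
            = xc (k - (((t+1):ℕ):ℤ)) (chainP hparent k a ha (t+1)).1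
        then (1 - (Mf (k - (((t+1):ℕ):ℤ)) (chainP hparent k a ha (t+1)).1 : ℝ≥0∞) * p)
              * μ (Q (k - (((t+1):ℕ):ℤ)) (chainP hparent k a ha (t+1)).1)
        else p * μ (Q (k - (((t+1):ℕ):ℤ)) (chainP hparent k a ha (t+1)).1) := by
    intro a ha t
    have e : k - ((t:ℕ):ℤ) = (k - (((t+1):ℕ):ℤ)) + 1 := by push_cast; ring
    have hmem1 := (chainP hparent k a ha t).2.1
    have hmem2 := (chainP hparent k a ha (t+1)).2.1
    have hsub := chainP_step hparent k a ha t
    revert hmem1 hmem2 hsub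
    generalize (chainP hparent k a ha t).1 = A
    generalize (chainP hparent k a ha (t+1)).1 = B
    intro hmem1 hmem2 hsub
    rw [e] at hmem1 hsub ⊢
    exact hrec _ _ hmem2 _ hmem1 hsub
  have hstep_ge : ∀ (a : ℕ) (ha : a ∈ N k) (t : ℕ),
      p * μ (Q (k - (((t+1):ℕ):ℤ)) (chainP hparent k a ha (t+1)).1)
        ≤ μ (Q (k - (t:ℤ)) (chainP hparent k a ha t).1) := by
    intro a ha t
    rw [hrec' a ha t]
    split_ifs with h
    · exact mul_le_mul_left (hfac_ge _ _) _
    · exact le_refl _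
  have hstep_le : ∀ (a : ℕ) (ha : a ∈ N k) (t : ℕ),
      μ (Q (k - (t:ℤ)) (chainP hparent k a ha t).1)
        ≤ μ (Q (k - (((t+1):ℕ):ℤ)) (chainP hparent k a ha (t+1)).1) :=
    fun a ha t => measure_mono (chainP_step hparent k a ha t)
  -- main induction
  have key : ∀ (d t : ℕ),
      (chainP hparent k i hi (t+d)).1 = (chainP hparent k j hj (t+d)).1 →
      μ (Q (k - (t:ℤ)) (chainP hparent k j hj t).1)
        ≤ p⁻¹ ^ (4 - min t 3) * μ (Q (k - (t:ℤ)) (chainP hparent k i hi t).1) := by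
    intro d
    induction d with
    | zero =>
      intro t h
      simp only [Nat.add_zero] at h
      rw [h]
      exact le_mul_of_one_le_left zero_le (hpowinv _)
    | succ d ih =>
      intro t h
      by_cases h0 : (chainP hparent k i hi t).1 = (chainP hparent k j hj t).1
      · rw [h0]
        exact le_mul_of_one_le_left zero_le (hpowinv _)
      · have h' : (chainP hparent k i hi ((t+1)+d)).1 = (chainP hparent k j hj ((t+1)+d)).1 := by
          have e : (t+1)+d = t+(d+1) := by omega
          rw [e]; exact h
        have IH := ih (t+1) h'
        by_cases h1 : (chainP hparent k i hi (t+1)).1 = (chainP hparent k j hj (t+1)).1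
        · -- split step : parents coincide
          have hle := hstep_le j hj t
          rw [← h1] at hle
          have hge := hstep_ge i hi t
          have hmain : μ (Q (k - (t:ℤ)) (chainP hparent k j hj t).1)
              ≤ p⁻¹ * μ (Q (k - (t:ℤ)) (chainP hparent k i hi t).1) := by
            calc μ (Q (k - (t:ℤ)) (chainP hparent k j hj t).1)
                ≤ μ (Q (k - (((t+1):ℕ):ℤ)) (chainP hparent k i hi (t+1)).1) := hle
            _ = p⁻¹ * (p * μ (Q (k - (((t+1):ℕ):ℤ)) (chainP hparent k i hi (t+1)).1)) := by
                rw [← mul_assoc, ENNReal.inv_mul_cancel hpne hptop, one_mul]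
            _ ≤ p⁻¹ * μ (Q (k - (t:ℤ)) (chainP hparent k i hi t).1) := mul_le_mul_right hge _
          refine hmain.trans (mul_le_mul_left ?_ _)
          calc p⁻¹ = p⁻¹ ^ 1 := (pow_one _).symm
          _ ≤ p⁻¹ ^ (4 - min t 3) := pow_le_pow_right' hinv1 (by omega)
        · -- parents distinct
          by_cases ht : 3 ≤ t
          · -- high levels : chain-j step must be off-centre
            have hoff : ¬ (xc (k - (t:ℤ)) (chainP hparent k j hj t).1
                = xc (k - (((t+1):ℕ):ℤ)) (chainP hparent k j hj (t+1)).1) := by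
              intro hz
              have hdd := hdisj (k - (((t+1):ℕ):ℤ)) (chainP hparent k i hi (t+1)).1
                (chainP hparent k i hi (t+1)).2.1 (chainP hparent k j hj (t+1)).1
                (chainP hparent k j hj (t+1)).2.1 h1
              have hxi : xc k i ∈ Q (k - (((t+1):ℕ):ℤ)) (chainP hparent k i hi (t+1)).1 :=
                (chainP hparent k i hi (t+1)).2.2 (hxc k i hi)
              have hlb : c * r ^ (k - (((t+1):ℕ):ℤ))
                  ≤ dist (xc (k - (((t+1):ℕ):ℤ)) (chainP hparent k j hj (t+1)).1) (xc k i) := by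
                by_contra hcon
                push_neg at hcon
                have hmem : xc k i ∈ Metric.ball
                    (xc (k - (((t+1):ℕ):ℤ)) (chainP hparent k j hj (t+1)).1)
                    (c * r ^ (k - (((t+1):ℕ):ℤ))) := by
                  rw [Metric.mem_ball, dist_comm]; exact hcon
                have hin := (hball _ _ (chainP hparent k j hj (t+1)).2.1).1 hmem
                have hcontra : xc k i ∈ Q (k - (((t+1):ℕ):ℤ)) (chainP hparent k i hi (t+1)).1
                    ∩ Q (k - (((t+1):ℕ):ℤ)) (chainP hparent k j hj (t+1)).1 := ⟨hxi, hin⟩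
                rw [hdd] at hcontra
                exact hcontra
              have e : k - ((t:ℕ):ℤ) = (k - (((t+1):ℕ):ℤ)) + 1 := by push_cast; ring
              have hub : dist (xc (k - (((t+1):ℕ):ℤ)) (chainP hparent k j hj (t+1)).1) (xc k j)
                  ≤ C * r ^ ((k - (((t+1):ℕ):ℤ)) + 1) := by
                rw [← hz, ← e]
                have hmem : xc k j ∈ Q (k - (t:ℤ)) (chainP hparent k j hj t).1 :=
                  (chainP hparent k j hj t).2.2 (hxc k j hj)
                have hcb := (hball _ _ (chainP hparent k j hj t).2.1).2 hmem
                rw [Metric.mem_closedBall] at hcb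
                rw [dist_comm]
                exact hcb
              have htri := dist_triangle
                (xc (k - (((t+1):ℕ):ℤ)) (chainP hparent k j hj (t+1)).1) (xc k j) (xc k i)
              have hdj : dist (xc k j) (xc k i) < r ^ (k-3) := by rw [dist_comm]; exact hdist
              have hgeom := geom_est r c C hr0 hr hc hC k (k - (((t+1):ℕ):ℤ))
                (by push_cast; omega)
              linarith
            have hjrec := hrec' j hj t
            rw [if_neg hoff] at hjrec
            rw [hjrec]
            have e1 : (4 - min t 3) = 1 := by omega
            have e2 : (4 - min (t+1) 3) = 1 := by omega
            rw [e1]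
            rw [e2, pow_one] at IH
            calc p * μ (Q (k - (((t+1):ℕ):ℤ)) (chainP hparent k j hj (t+1)).1)
                ≤ p * (p⁻¹ * μ (Q (k - (((t+1):ℕ):ℤ)) (chainP hparent k i hi (t+1)).1)) :=
                  mul_le_mul_right IH _
            _ = p⁻¹ * (p * μ (Q (k - (((t+1):ℕ):ℤ)) (chainP hparent k i hi (t+1)).1)) := by
                  rw [← mul_assoc, ← mul_assoc, mul_comm p p⁻¹]
            _ ≤ p⁻¹ * μ (Q (k - (t:ℤ)) (chainP hparent k i hi t).1) :=
                  mul_le_mul_right (hstep_ge i hi t) _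
            _ = p⁻¹ ^ 1 * μ (Q (k - (t:ℤ)) (chainP hparent k i hi t).1) := by rw [pow_one]
          · -- low levels : spend one factor of p⁻¹
            push_neg at ht
            have hle := hstep_le j hj t
            have hge := hstep_ge i hi t
            calc μ (Q (k - (t:ℤ)) (chainP hparent k j hj t).1)
                ≤ μ (Q (k - (((t+1):ℕ):ℤ)) (chainP hparent k j hj (t+1)).1) := hle
            _ ≤ p⁻¹ ^ (4 - min (t+1) 3) * μ (Q (k - (((t+1):ℕ):ℤ)) (chainP hparent k i hi (t+1)).1) := IH
            _ = p⁻¹ ^ (4 - min (t+1) 3) * (p⁻¹ * (p * μ (Q (k - (((t+1):ℕ):ℤ)) (chainP hparent k i hi (t+1)).1))) := by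
                  rw [← mul_assoc p⁻¹, ENNReal.inv_mul_cancel hpne hptop, one_mul]
            _ ≤ p⁻¹ ^ (4 - min (t+1) 3) * (p⁻¹ * μ (Q (k - (t:ℤ)) (chainP hparent k i hi t).1)) := by
                  exact mul_le_mul_right (mul_le_mul_right hge _) _
            _ = (p⁻¹ ^ (4 - min (t+1) 3) * p⁻¹) * μ (Q (k - (t:ℤ)) (chainP hparent k i hi t).1) := by
                  rw [mul_assoc]
            _ = p⁻¹ ^ (4 - min t 3) * μ (Q (k - (t:ℤ)) (chainP hparent k i hi t).1) := by
                  rw [← pow_succ]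
                  congr 2
                  omega
  -- find a common ancestor level
  obtain ⟨m, hmk, l, hl, hQil, hQjl⟩ := hanc k i hi j hj
  set t0 := (k - m).toNat with ht0
  have hkm : k - ((t0:ℕ):ℤ) = m := by omega
  have hcommon : ∀ (a : ℕ) (ha : a ∈ N k), Q k a ⊆ Q m l →
      (chainP hparent k a ha t0).1 = l := by
    intro a ha hsub
    by_contra hne
    have hmem : (chainP hparent k a ha t0).1 ∈ N m := by
      rw [← hkm]; exact (chainP hparent k a ha t0).2.1
    have hd := hdisj m _ hmem l hl hne
    have hx1 : xc k a ∈ Q m (chainP hparent k a ha t0).1 := by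
      have h2 := (chainP hparent k a ha t0).2.2 (hxc k a ha)
      revert h2
      generalize (chainP hparent k a ha t0).1 = A
      rw [hkm]
      exact id
    have hx2 : xc k a ∈ Q m l := hsub (hxc k a ha)
    have hcontra : xc k a ∈ Q m (chainP hparent k a ha t0).1 ∩ Q m l := ⟨hx1, hx2⟩
    rw [hd] at hcontra
    exact hcontra
  have hfin := key t0 0 (by
    have e : 0 + t0 = t0 := by omega
    rw [e, hcommon i hi hQil, hcommon j hj hQjl])
  have hI0 : (chainP hparent k i hi 0).1 = i := rfl
  have hJ0 : (chainP hparent k j hj 0).1 = j := rfl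
  rw [hI0, hJ0] at hfin
  have e0 : k - ((0:ℕ):ℤ) = k := by push_cast; ring
  rw [e0] at hfin
  simpa using hfin
end
end

section
/- Let μ be a measure on a doubling metric space whose generalised-dyadic-cube masses satisfy the recursion: each cube Q_{k,i} has M_{k,i} + 1 ≤ M + 1 children, the off-center children each get mass p μ(Q_{k,i}) and the center child gets (1 − M_{k,i} p) μ(Q_{k,i}), with 0 < p ≤ 1/(M+1). Then for every 0 < q < 1, every cube Q_{k,i}, and every n ≥ 1, the sum of μ(Q)^q over all level-(k+n) subcubes Q of Q_{k,i} is at most μ(Q_{k,i})^q · (M p^q + (1 − M p)^q)^n. -/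
open Metric Set MeasureTheory ENNReal Classical
noncomputable section

lemma arith (M m : ℕ) (hm : m ≤ M) (p : ℝ≥0∞) (hp1 : p ≤ 1 / ((M : ℝ≥0∞) + 1))
    (q : ℝ) (hq0 : 0 < q) (hq1 : q < 1) :
    ((1 : ℝ≥0∞) - m * p) ^ q + m * p ^ q
      ≤ (M : ℝ≥0∞) * p ^ q + (1 - (M : ℝ≥0∞) * p) ^ q := by
  have hMp : (M : ℝ≥0∞) * p ≤ 1 := by
    calc (M : ℝ≥0∞) * p ≤ ((M : ℝ≥0∞) + 1) * p := by
          gcongr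
          exact le_self_add
      _ ≤ ((M : ℝ≥0∞) + 1) * (1 / ((M : ℝ≥0∞) + 1)) := by gcongr
      _ ≤ 1 := ENNReal.mul_div_le
  have hmp : (m : ℝ≥0∞) * p ≤ (M : ℝ≥0∞) * p := by
    have : (m : ℝ≥0∞) ≤ M := by exact_mod_cast hm
    exact mul_le_mul_left this p
  have hpt : p ≠ ∞ :=
    ((hp1.trans (ENNReal.div_le_of_le_mul (by simp))).trans_lt ENNReal.one_lt_top).ne
  have hsub : ((M : ℝ≥0∞) - m) * p = (M : ℝ≥0∞) * p - m * p := by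
    rw [ENNReal.sub_mul (fun _ _ => hpt)]
  have hkey : (1 : ℝ≥0∞) - m * p = (1 - (M : ℝ≥0∞) * p) + ((M : ℝ≥0∞) - m) * p := by
    rw [hsub, tsub_add_tsub_cancel hMp hmp]
  have hle : ((1 : ℝ≥0∞) - m * p) ^ q ≤ (1 - (M : ℝ≥0∞) * p) ^ q + (((M : ℝ≥0∞) - m) * p) ^ q := by
    rw [hkey]
    exact ENNReal.rpow_add_le_add_rpow _ _ hq0.le hq1.le
  have hMm : ((M : ℝ≥0∞) - m) = ((M - m : ℕ) : ℝ≥0∞) := by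
    exact (ENNReal.natCast_sub M m).symm
  have h2 : (((M : ℝ≥0∞) - m) * p) ^ q ≤ ((M : ℝ≥0∞) - m) * p ^ q := by
    rw [ENNReal.mul_rpow_of_nonneg _ _ hq0.le]
    gcongr
    rw [hMm]
    rcases Nat.eq_zero_or_pos (M - m) with h | h
    · simp [h, ENNReal.zero_rpow_of_pos hq0]
    · calc ((M - m : ℕ) : ℝ≥0∞) ^ q ≤ ((M - m : ℕ) : ℝ≥0∞) ^ (1:ℝ) := by
            apply ENNReal.rpow_le_rpow_of_exponent_le _ hq1.le
            exact_mod_cast h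
        _ = _ := ENNReal.rpow_one _
  calc ((1 : ℝ≥0∞) - m * p) ^ q + m * p ^ q
      ≤ (1 - (M : ℝ≥0∞) * p) ^ q + ((M : ℝ≥0∞) - m) * p ^ q + m * p ^ q := by
        refine add_le_add ?_ le_rfl
        exact hle.trans (add_le_add le_rfl h2)
    _ = (1 - (M : ℝ≥0∞) * p) ^ q + (((M : ℝ≥0∞) - m) + m) * p ^ q := by ring
    _ = (M : ℝ≥0∞) * p ^ q + (1 - (M : ℝ≥0∞) * p) ^ q := by
        rw [tsub_add_cancel_of_le (by exact_mod_cast hm), add_comm]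

lemma onestep {X : Type*} [MetricSpace X] [MeasurableSpace X]
    (N : ℤ → Set ℕ) (Q : ℤ → ℕ → Set X)
    (M : ℕ) (Mf : ℤ → ℕ → ℕ) (hM : ∀ (k : ℤ) (i : ℕ), Mf k i ≤ M)
    (hchild : ∀ (k : ℤ), ∀ i ∈ N k,
      Set.ncard {j | j ∈ N (k + 1) ∧ Q (k + 1) j ⊆ Q k i} = Mf k i + 1)
    (p : ℝ≥0∞) (hp0 : 0 < p) (hp1 : p ≤ 1 / ((M : ℝ≥0∞) + 1))
    (ctr : ℤ → ℕ → ℕ)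
    (hctr : ∀ (k : ℤ), ∀ i ∈ N k, ctr k i ∈ N (k + 1) ∧ Q (k + 1) (ctr k i) ⊆ Q k i)
    (μ : Measure X)
    (hrec : ∀ (k : ℤ), ∀ i ∈ N k, ∀ j ∈ N (k + 1), Q (k + 1) j ⊆ Q k i →
      μ (Q (k + 1) j) = if j = ctr k i then (1 - (Mf k i : ℝ≥0∞) * p) * μ (Q k i)
        else p * μ (Q k i))
    (q : ℝ) (hq0 : 0 < q) (hq1 : q < 1) (k : ℤ) (i : ℕ) (hi : i ∈ N k) :
    (∑' j : {j : ℕ // j ∈ N (k + 1) ∧ Q (k + 1) j ⊆ Q k i}, μ (Q (k + 1) (j : ℕ)) ^ q)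
      ≤ μ (Q k i) ^ q * ((M : ℝ≥0∞) * p ^ q + (1 - (M : ℝ≥0∞) * p) ^ q) := by
  classical
  set S : Set ℕ := {j | j ∈ N (k + 1) ∧ Q (k + 1) j ⊆ Q k i} with hSdef
  have hScard : S.ncard = Mf k i + 1 := hchild k i hi
  have hSfin : S.Finite := Set.finite_of_ncard_ne_zero (by omega)
  have hc : ctr k i ∈ S := ⟨(hctr k i hi).1, (hctr k i hi).2⟩
  set s : Finset ℕ := hSfin.toFinset with hsdef
  have hcards : s.card = Mf k i + 1 := by
    rw [hsdef, ← Set.ncard_eq_toFinset_card _ hSfin]; exact hScard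
  have hcs : ctr k i ∈ s := hSfin.mem_toFinset.2 hc
  have htsum : (∑' j : {j : ℕ // j ∈ N (k + 1) ∧ Q (k + 1) j ⊆ Q k i},
      μ (Q (k + 1) (j : ℕ)) ^ q) = ∑ j ∈ s, μ (Q (k + 1) j) ^ q := by
    calc (∑' j : {j : ℕ // j ∈ N (k + 1) ∧ Q (k + 1) j ⊆ Q k i}, μ (Q (k + 1) (j : ℕ)) ^ q)
        = ∑' j : ℕ, S.indicator (fun j => μ (Q (k + 1) j) ^ q) j :=
          tsum_subtype S (fun j => μ (Q (k + 1) j) ^ q)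
      _ = ∑ j ∈ s, S.indicator (fun j => μ (Q (k + 1) j) ^ q) j := by
          refine tsum_eq_sum ?_
          intro j hj
          have : j ∉ S := fun h => hj (hSfin.mem_toFinset.2 h)
          simp [Set.indicator_of_notMem this]
      _ = ∑ j ∈ s, μ (Q (k + 1) j) ^ q := by
          refine Finset.sum_congr rfl fun j hj => ?_
          exact Set.indicator_of_mem (hSfin.mem_toFinset.1 hj) _
  rw [htsum]
  have hsum : ∑ j ∈ s, μ (Q (k + 1) j) ^ q
      = ((1 - (Mf k i : ℝ≥0∞) * p) * μ (Q k i)) ^ q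
        + (Mf k i : ℝ≥0∞) * (p * μ (Q k i)) ^ q := by
    rw [← Finset.add_sum_erase _ _ hcs]
    congr 1
    · have hm := (hSfin.mem_toFinset.1 hcs)
      rw [hrec k i hi (ctr k i) hm.1 hm.2]
      simp
    · calc ∑ j ∈ s.erase (ctr k i), μ (Q (k + 1) j) ^ q
          = ∑ _j ∈ s.erase (ctr k i), (p * μ (Q k i)) ^ q := by
            refine Finset.sum_congr rfl fun j hj => ?_
            have hjS := hSfin.mem_toFinset.1 (Finset.mem_of_mem_erase hj)
            rw [hrec k i hi j hjS.1 hjS.2, if_neg (Finset.ne_of_mem_erase hj)]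
        _ = (Mf k i : ℝ≥0∞) * (p * μ (Q k i)) ^ q := by
            rw [Finset.sum_const, Finset.card_erase_of_mem hcs, hcards]
            simp [nsmul_eq_mul]
  rw [hsum, ENNReal.mul_rpow_of_nonneg _ _ hq0.le, ENNReal.mul_rpow_of_nonneg _ _ hq0.le]
  calc (1 - (Mf k i : ℝ≥0∞) * p) ^ q * μ (Q k i) ^ q
        + (Mf k i : ℝ≥0∞) * (p ^ q * μ (Q k i) ^ q)
      = ((1 - (Mf k i : ℝ≥0∞) * p) ^ q + (Mf k i : ℝ≥0∞) * p ^ q) * μ (Q k i) ^ q := by ring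
    _ ≤ ((M : ℝ≥0∞) * p ^ q + (1 - (M : ℝ≥0∞) * p) ^ q) * μ (Q k i) ^ q := by
        gcongr ?_ * _
        exact arith M (Mf k i) (hM k i) p hp1 q hq0 hq1
    _ = _ := mul_comm _ _

/-- For a measure whose generalised-dyadic-cube masses follow the recursion (each cube
`Q k i` has `Mf k i + 1 ≤ M + 1` children, off-centre children get mass `p·μ(Q k i)`,
the centre child gets `(1 - Mf k i · p)·μ(Q k i)`, `0 < p ≤ 1/(M+1)`): for every
`0 < q < 1`, every cube and every `n ≥ 1`, the sum of `μ(Q)^q` over the level-`(k+n)`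
subcubes `Q` of `Q k i` is at most `μ(Q k i)^q · (M p^q + (1 - M p)^q)^n`. -/
theorem sum_subcube_masses_rpow_le {X : Type*} [MetricSpace X] [MeasurableSpace X]
    [BorelSpace X]
    (N : ℤ → Set ℕ) (Q : ℤ → ℕ → Set X)
    (hcover : ∀ k : ℤ, ⋃ i ∈ N k, Q k i = Set.univ)
    (hnest : ∀ (k m : ℤ), m ≤ k → ∀ i ∈ N k, ∀ j ∈ N m,
      Q k i ∩ Q m j = ∅ ∨ Q k i ⊆ Q m j)
    (hdisj : ∀ (k : ℤ), ∀ i ∈ N k, ∀ j ∈ N k, i ≠ j → Q k i ∩ Q k j = ∅)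
    (M : ℕ) (Mf : ℤ → ℕ → ℕ) (hM : ∀ (k : ℤ) (i : ℕ), Mf k i ≤ M)
    (hchild : ∀ (k : ℤ), ∀ i ∈ N k,
      Set.ncard {j | j ∈ N (k + 1) ∧ Q (k + 1) j ⊆ Q k i} = Mf k i + 1)
    (p : ℝ≥0∞) (hp0 : 0 < p) (hp1 : p ≤ 1 / ((M : ℝ≥0∞) + 1))
    (ctr : ℤ → ℕ → ℕ)
    (hctr : ∀ (k : ℤ), ∀ i ∈ N k, ctr k i ∈ N (k + 1) ∧ Q (k + 1) (ctr k i) ⊆ Q k i)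
    (μ : Measure X)
    (hrec : ∀ (k : ℤ), ∀ i ∈ N k, ∀ j ∈ N (k + 1), Q (k + 1) j ⊆ Q k i →
      μ (Q (k + 1) j) = if j = ctr k i then (1 - (Mf k i : ℝ≥0∞) * p) * μ (Q k i)
        else p * μ (Q k i)) :
    ∀ (q : ℝ), 0 < q → q < 1 → ∀ (k : ℤ), ∀ i ∈ N k, ∀ n : ℕ, 1 ≤ n →
      (∑' j : {j : ℕ // j ∈ N (k + n) ∧ Q (k + n) j ⊆ Q k i},
          μ (Q (k + n) (j : ℕ)) ^ q)
        ≤ μ (Q k i) ^ q * ((M : ℝ≥0∞) * p ^ q + (1 - (M : ℝ≥0∞) * p) ^ q) ^ n := by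
  intro q hq0 hq1 k i hi n hn
  set C : ℝ≥0∞ := (M : ℝ≥0∞) * p ^ q + (1 - (M : ℝ≥0∞) * p) ^ q with hC
  induction n, hn using Nat.le_induction with
  | base =>
    simp only [Nat.cast_one, pow_one]
    exact onestep N Q M Mf hM hchild p hp0 hp1 ctr hctr μ hrec q hq0 hq1 k i hi
  | succ n hn IH =>
    have hc2 : (k + ((n + 1 : ℕ) : ℤ)) = (k + (n : ℤ)) + 1 := by push_cast; ring
    rw [show ((((n:ℕ) + 1 : ℕ) : ℤ)) = (n : ℤ) + 1 from by push_cast; ring] at *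
    rw [show k + ((n : ℤ) + 1) = k + (n : ℤ) + 1 from by ring, pow_succ]
    set m : ℤ := k + (n : ℤ) with hm
    set f : ℕ → ℝ≥0∞ := fun j => μ (Q (m + 1) j) ^ q with hf
    set Sbig : Set ℕ := {j | j ∈ N (m + 1) ∧ Q (m + 1) j ⊆ Q k i} with hSbig
    set I : Set ℕ := {i' | i' ∈ N m ∧ Q m i' ⊆ Q k i} with hI
    set S' : ℕ → Set ℕ := fun i' => {j | j ∈ N (m + 1) ∧ Q (m + 1) j ⊆ Q m i'} with hS'
    have hkm : k ≤ m := by rw [hm]; omega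
    have key : ∀ j : ℕ, Sbig.indicator f j
        ≤ ∑' i' : ℕ, I.indicator (fun i' => (S' i').indicator f j) i' := by
      intro j
      by_cases hj : j ∈ Sbig
      · rw [Set.indicator_of_mem hj]
        by_cases hne : (Q (m + 1) j).Nonempty
        · obtain ⟨x, hx⟩ := hne
          have hxuniv : x ∈ ⋃ i' ∈ N m, Q m i' := by rw [hcover m]; trivial
          obtain ⟨i', hi', hxi'⟩ := Set.mem_iUnion₂.1 hxuniv
          have h1 : Q (m + 1) j ⊆ Q m i' := by
            rcases hnest (m + 1) m (by omega) j hj.1 i' hi' with h | h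
            · exact absurd (Set.mem_inter hx hxi') (h ▸ Set.notMem_empty x)
            · exact h
          have h2 : Q m i' ⊆ Q k i := by
            rcases hnest m k hkm i' hi' i hi with h | h
            · exact absurd (Set.mem_inter hxi' (hj.2 hx)) (h ▸ Set.notMem_empty x)
            · exact h
          have hi'I : i' ∈ I := ⟨hi', h2⟩
          have hjS' : j ∈ S' i' := ⟨hj.1, h1⟩
          calc f j = I.indicator (fun i' => (S' i').indicator f j) i' := by
                rw [Set.indicator_of_mem hi'I, Set.indicator_of_mem hjS']
            _ ≤ _ := ENNReal.le_tsum i'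
        · have : Q (m + 1) j = ∅ := Set.not_nonempty_iff_eq_empty.1 hne
          have : f j = 0 := by
            rw [hf]; simp only [this, measure_empty]
            exact ENNReal.zero_rpow_of_pos hq0
          rw [this]; exact zero_le
      · rw [Set.indicator_of_notMem hj]; exact zero_le
    have hIH : (∑' i' : ℕ, I.indicator (fun i' => μ (Q m i') ^ q) i')
        ≤ μ (Q k i) ^ q * C ^ n := by
      have := IH
      calc (∑' i' : ℕ, I.indicator (fun i' => μ (Q m i') ^ q) i')
          = ∑' i' : {i' : ℕ // i' ∈ N (k + (n : ℕ)) ∧ Q (k + (n : ℕ)) i' ⊆ Q k i},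
              μ (Q (k + (n : ℕ)) (i' : ℕ)) ^ q :=
            (tsum_subtype I (fun i' => μ (Q m i') ^ q)).symm
        _ ≤ _ := IH
    calc (∑' j : {j : ℕ // j ∈ N (m + 1) ∧ Q (m + 1) j ⊆ Q k i}, μ (Q (m + 1) (j : ℕ)) ^ q)
        = ∑' j : ℕ, Sbig.indicator f j := tsum_subtype Sbig f
      _ ≤ ∑' j : ℕ, ∑' i' : ℕ, I.indicator (fun i' => (S' i').indicator f j) i' :=
          ENNReal.tsum_le_tsum key
      _ = ∑' i' : ℕ, ∑' j : ℕ, I.indicator (fun i' => (S' i').indicator f j) i' :=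
          ENNReal.tsum_comm
      _ = ∑' i' : ℕ, I.indicator (fun i' => ∑' j : ℕ, (S' i').indicator f j) i' := by
          refine tsum_congr fun i' => ?_
          by_cases h : i' ∈ I
          · simp only [Set.indicator_of_mem h]
          · simp only [Set.indicator_of_notMem h, tsum_zero]
      _ ≤ ∑' i' : ℕ, I.indicator (fun i' => μ (Q m i') ^ q * C) i' := by
          refine ENNReal.tsum_le_tsum fun i' => ?_
          by_cases h : i' ∈ I
          · simp only [Set.indicator_of_mem h]
            calc (∑' j : ℕ, (S' i').indicator f j)
                = ∑' j : {j : ℕ // j ∈ N (m + 1) ∧ Q (m + 1) j ⊆ Q m i'},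
                    μ (Q (m + 1) (j : ℕ)) ^ q := (tsum_subtype (S' i') f).symm
              _ ≤ _ := onestep N Q M Mf hM hchild p hp0 hp1 ctr hctr μ hrec q hq0 hq1
                    m i' h.1
          · simp only [Set.indicator_of_notMem h]; exact le_rfl
      _ = (∑' i' : ℕ, I.indicator (fun i' => μ (Q m i') ^ q) i') * C := by
          rw [← ENNReal.tsum_mul_right]
          refine tsum_congr fun i' => ?_
          by_cases h : i' ∈ I
          · simp only [Set.indicator_of_mem h]
          · simp only [Set.indicator_of_notMem h, zero_mul]
      _ ≤ (μ (Q k i) ^ q * C ^ n) * C := by gcongr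
      _ = μ (Q k i) ^ q * (C ^ n * C) := by ring
end
end
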